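/- arXiv:1904.13031 — 8 statements merged into one kernel-verified Lean document; each statement's English description precedes it below -/
import Mathlib

section
/- Let X be a real Banach space, J its duality mapping, A : X → X* a bounded linear monotone operator, λ > 0, ε ≥ 0, x ∈ X, and f* ∈ X*. Suppose that (Ax + λ·Jx) ∩ B̄(f*, ε) ≠ ∅ and ε ≤ 2λ‖f*‖/(‖A‖ + 3λ). Then ⟨x, f*⟩ ≥ λ·((‖f*‖ − ε)/(‖A‖ + λ))² − ε·(‖f*‖ − ε)/(‖A‖ + λ). -/
open NormedSpace

/-- The duality mapping of a real normed space: `x* ∈ J x` iff `⟨x, x*⟩ = ‖x‖² = ‖x*‖²`. -/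
def dualityMap {X : Type*} [NormedAddCommGroup X] [NormedSpace ℝ X] (x : X) :
    Set (StrongDual ℝ X) :=
  {f | f x = ‖x‖ ^ 2 ∧ ‖x‖ ^ 2 = ‖f‖ ^ 2}

theorem stmt3 {X : Type*} [NormedAddCommGroup X] [NormedSpace ℝ X] [CompleteSpace X]
    (A : X →L[ℝ] StrongDual ℝ X)
    (hmono : ∀ x y : X, 0 ≤ (A x - A y) (x - y))
    (lam : ℝ) (hlam : 0 < lam) (ε : ℝ) (hε : 0 ≤ ε)
    (x : X) (f : StrongDual ℝ X)
    (hmeet : ∃ xs ∈ dualityMap x, ‖A x + lam • xs - f‖ ≤ ε)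
    (hεsmall : ε ≤ 2 * lam * ‖f‖ / (‖A‖ + 3 * lam)) :
    f x ≥ lam * ((‖f‖ - ε) / (‖A‖ + lam)) ^ 2 - ε * ((‖f‖ - ε) / (‖A‖ + lam)) := by
  obtain ⟨xs, ⟨hx1, hx2⟩, hnear⟩ := hmeet
  set r := ‖x‖ with hr
  have hr0 : 0 ≤ r := norm_nonneg x
  have hxs : ‖xs‖ = r := by
    have := hx2
    nlinarith [norm_nonneg xs, norm_nonneg x]
  have hA0 : 0 < ‖A‖ + lam := by positivity
  have hA3 : 0 < ‖A‖ + 3 * lam := by positivity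
  -- monotonicity at 0 gives (A x) x ≥ 0
  have hAxx : 0 ≤ A x x := by
    have := hmono x 0
    simpa using this
  -- evaluate the near condition at x
  have heval : |A x x + lam * r ^ 2 - f x| ≤ ε * r := by
    have h1 : ‖(A x + lam • xs - f) x‖ ≤ ‖A x + lam • xs - f‖ * ‖x‖ :=
      (A x + lam • xs - f).le_opNorm x
    have h2 : (A x + lam • xs - f) x = A x x + lam * r ^ 2 - f x := by
      simp [hx1]
    rw [h2] at h1
    calc |A x x + lam * r ^ 2 - f x| = ‖A x x + lam * r ^ 2 - f x‖ := rfl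
      _ ≤ ‖A x + lam • xs - f‖ * ‖x‖ := h1
      _ ≤ ε * r := by apply mul_le_mul_of_nonneg_right hnear hr0
  have hfx : f x ≥ lam * r ^ 2 - ε * r := by
    have := abs_le.mp heval
    nlinarith [this.1, this.2, hAxx]
  -- lower bound on r
  have hrlow : ‖f‖ - ε ≤ (‖A‖ + lam) * r := by
    have h1 : ‖f‖ ≤ ‖A x + lam • xs‖ + ε := by
      calc ‖f‖ = ‖(A x + lam • xs) - (A x + lam • xs - f)‖ := by rw [sub_sub_cancel]
        _ ≤ ‖A x + lam • xs‖ + ‖A x + lam • xs - f‖ := norm_sub_le _ _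
        _ ≤ ‖A x + lam • xs‖ + ε := by linarith
    have h2 : ‖A x + lam • xs‖ ≤ (‖A‖ + lam) * r := by
      calc ‖A x + lam • xs‖ ≤ ‖A x‖ + ‖lam • xs‖ := norm_add_le _ _
        _ ≤ ‖A‖ * r + lam * r := by
            have := A.le_opNorm x
            have h3 : ‖lam • xs‖ = lam * r := by
              rw [norm_smul, hxs, Real.norm_eq_abs, abs_of_pos hlam]
            rw [h3]; linarith
        _ = (‖A‖ + lam) * r := by ring
    linarith
  set t := (‖f‖ - ε) / (‖A‖ + lam) with ht
  have htr : t ≤ r := by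
    rw [ht, div_le_iff₀ hA0]; linarith
  -- ε ≤ 2 lam t
  have hkey : ε ≤ 2 * lam * t := by
    have h1 : ε * (‖A‖ + 3 * lam) ≤ 2 * lam * ‖f‖ := by
      have := (le_div_iff₀ hA3).mp hεsmall
      linarith
    rw [ht, ← mul_div_assoc, le_div_iff₀ hA0]
    nlinarith
  have ht0 : 0 ≤ t := by nlinarith
  calc f x ≥ lam * r ^ 2 - ε * r := hfx
    _ ≥ lam * t ^ 2 - ε * t := by nlinarith [mul_nonneg (sub_nonneg.2 htr) (by linarith : (0:ℝ) ≤ 2 * lam * t - ε), mul_nonneg hlam.le (sq_nonneg (r - t))]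
end

section
/- The space ℓ¹(ℕ, ℝ) is rugged: the closed linear span of the set {u − v : u, v ∈ Jx for some x ∈ ℓ¹} equals ℓ∞, where J is the duality mapping of ℓ¹. More precisely, with e₁ and e₂ the first two canonical unit vectors of ℓ¹, the set Je₁ − Je₁ + Je₂ − Je₂ ⊆ ℓ∞ contains every sequence each of whose entries lies in [−2, 2]. -/
/-- The duality mapping of `ℓ¹(ℕ, ℝ)`, with values viewed in `ℓ∞(ℕ, ℝ)`:
`y ∈ J x` iff `⟨x, y⟩ = ‖x‖₁² = ‖y‖∞²`. -/
def dualityMapL1 (x : lp (fun _ : ℕ => ℝ) 1) : Set (lp (fun _ : ℕ => ℝ) ⊤) :=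
  {y | ∑' n, x n * y n = ‖x‖ ^ 2 ∧ ‖x‖ ^ 2 = ‖y‖ ^ 2}

set_option maxHeartbeats 1000000
set_option synthInstance.maxHeartbeats 400000

namespace RuggedAux

/-- Build an element of `ℓ∞` from a function bounded by 1. -/
def mk (g : ℕ → ℝ) (h : ∀ n, |g n| ≤ 1) : lp (fun _ : ℕ => ℝ) ⊤ :=
  ⟨g, memℓp_infty ⟨1, by rintro r ⟨n, rfl⟩; exact h n⟩⟩

@[simp] lemma mk_apply (g : ℕ → ℝ) (h : ∀ n, |g n| ≤ 1) (n : ℕ) : (mk g h) n = g n := rfl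

lemma norm_single_one (i : ℕ) : ‖lp.single (E := fun _ : ℕ => ℝ) 1 i (1 : ℝ)‖ = 1 := by
  have := lp.norm_single (E := fun _ : ℕ => ℝ) (p := 1) (by norm_num) i (1 : ℝ)
  simpa using this

lemma norm_mk (g : ℕ → ℝ) (h : ∀ n, |g n| ≤ 1) (i : ℕ) (hi : g i = 1) : ‖mk g h‖ = 1 := by
  refine le_antisymm (lp.norm_le_of_forall_le (zero_le_one (α := ℝ)) fun n => ?_) ?_
  · simpa using h n
  · have h1 := lp.norm_apply_le_norm (E := fun _ : ℕ => ℝ) ENNReal.top_ne_zero (mk g h) i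
    rw [mk_apply, hi, norm_one] at h1
    exact h1

lemma mem_duality (g : ℕ → ℝ) (h : ∀ n, |g n| ≤ 1) (i : ℕ) (hi : g i = 1) :
    mk g h ∈ dualityMapL1 (lp.single 1 i (1 : ℝ)) := by
  have hnorm : ‖mk g h‖ = 1 := norm_mk g h i hi
  have hsingle : ‖lp.single (E := fun _ : ℕ => ℝ) 1 i (1 : ℝ)‖ = 1 := norm_single_one i
  constructor
  · have : ∑' n, (lp.single (E := fun _ : ℕ => ℝ) 1 i (1 : ℝ)) n * (mk g h) n = 1 := by
      rw [tsum_eq_single i]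
      · rw [lp.single_apply_self]; simpa using hi
      · intro n hn
        rw [lp.single_apply_ne 1 i _ hn, zero_mul]
    rw [this, hsingle]; norm_num
  · rw [hsingle, hnorm]

end RuggedAux

theorem stmt11 :
    (Submodule.span ℝ {d : lp (fun _ : ℕ => ℝ) ⊤ |
        ∃ x u v, u ∈ dualityMapL1 x ∧ v ∈ dualityMapL1 x ∧ d = u - v}).topologicalClosure
      = ⊤ ∧
    (∀ z : lp (fun _ : ℕ => ℝ) ⊤, (∀ n, z n ∈ Set.Icc (-2 : ℝ) 2) →
      ∃ a b c d,
        a ∈ dualityMapL1 (lp.single 1 0 (1 : ℝ)) ∧ b ∈ dualityMapL1 (lp.single 1 0 (1 : ℝ)) ∧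
        c ∈ dualityMapL1 (lp.single 1 1 (1 : ℝ)) ∧ d ∈ dualityMapL1 (lp.single 1 1 (1 : ℝ)) ∧
        z = a - b + c - d) := by
  have main : ∀ z : lp (fun _ : ℕ => ℝ) ⊤, (∀ n, z n ∈ Set.Icc (-2 : ℝ) 2) →
      ∃ a b c d,
        a ∈ dualityMapL1 (lp.single 1 0 (1 : ℝ)) ∧ b ∈ dualityMapL1 (lp.single 1 0 (1 : ℝ)) ∧
        c ∈ dualityMapL1 (lp.single 1 1 (1 : ℝ)) ∧ d ∈ dualityMapL1 (lp.single 1 1 (1 : ℝ)) ∧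
        z = a - b + c - d := by
    intro z hz
    have hb : ∀ n, |z n / 2| ≤ 1 := by
      intro n
      have h2 : |z n| ≤ 2 := abs_le.2 ⟨(hz n).1, (hz n).2⟩
      rw [abs_div, abs_of_pos (by norm_num : (0:ℝ) < 2)]
      linarith
    -- a : a 0 = 1, a n = z n / 2 for n ≠ 0 (n ≥ 1)
    set ga : ℕ → ℝ := fun n => if n = 0 then 1 else z n / 2 with hga
    set gb : ℕ → ℝ := fun n => if n = 0 then 1 else -(z n / 2) with hgb
    set gc : ℕ → ℝ := fun n => if n = 1 then 1 else if n = 0 then z 0 / 2 else 0 with hgc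
    set gd : ℕ → ℝ := fun n => if n = 1 then 1 else if n = 0 then -(z 0 / 2) else 0 with hgd
    have ha1 : ∀ n, |ga n| ≤ 1 := by
      intro n; simp only [hga]; split <;> simp_all [hb n]
    have hb1 : ∀ n, |gb n| ≤ 1 := by
      intro n; simp only [hgb]; split
      · simp
      · rw [abs_neg]; exact hb n
    have hc1 : ∀ n, |gc n| ≤ 1 := by
      intro n; simp only [hgc]; split
      · simp
      · split
        · exact hb 0
        · simp
    have hd1 : ∀ n, |gd n| ≤ 1 := by
      intro n; simp only [hgd]; split
      · simp
      · split
        · rw [abs_neg]; exact hb 0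
        · simp
    refine ⟨RuggedAux.mk ga ha1, RuggedAux.mk gb hb1, RuggedAux.mk gc hc1, RuggedAux.mk gd hd1,
      RuggedAux.mem_duality ga ha1 0 (by simp [hga]),
      RuggedAux.mem_duality gb hb1 0 (by simp [hgb]),
      RuggedAux.mem_duality gc hc1 1 (by simp [hgc]),
      RuggedAux.mem_duality gd hd1 1 (by simp [hgd]), ?_⟩
    apply lp.ext
    funext n
    simp only [lp.coeFn_add, lp.coeFn_sub, Pi.add_apply, Pi.sub_apply, RuggedAux.mk_apply,
      hga, hgb, hgc, hgd]
    rcases n with _ | _ | n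
    · norm_num
    · norm_num
    · norm_num
  refine ⟨?_, main⟩
  have hspan : (Submodule.span ℝ {d : lp (fun _ : ℕ => ℝ) ⊤ |
        ∃ x u v, u ∈ dualityMapL1 x ∧ v ∈ dualityMapL1 x ∧ d = u - v}) = ⊤ := by
    rw [eq_top_iff]
    intro z _
    set C := ‖z‖ with hC
    have hCpos : (0 : ℝ) < C + 1 := by positivity
    set t : ℝ := 2 / (C + 1) with ht
    have htpos : 0 < t := by positivity
    have hmem : ∀ n, (t • z) n ∈ Set.Icc (-2 : ℝ) 2 := by
      intro n
      have h1 : ‖z n‖ ≤ C := lp.norm_apply_le_norm ENNReal.top_ne_zero z n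
      have h2 : (t • z) n = t * z n := by rw [lp.coeFn_smul]; rfl
      rw [h2]
      have habs : |t * z n| ≤ 2 := by
        rw [abs_mul, abs_of_pos htpos]
        have : |z n| ≤ C := h1
        calc t * |z n| ≤ t * C := by
              exact mul_le_mul_of_nonneg_left this htpos.le
          _ = 2 * (C / (C + 1)) := by rw [ht]; ring
          _ ≤ 2 * 1 := by
              apply mul_le_mul_of_nonneg_left _ (by norm_num)
              rw [div_le_one hCpos]; linarith
          _ = 2 := by ring
      exact abs_le.1 habs
    obtain ⟨a, b, c, d, ha, hb, hc, hd, heq⟩ := main (t • z) hmem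
    have hmem1 : a - b ∈ (Submodule.span ℝ {d : lp (fun _ : ℕ => ℝ) ⊤ |
        ∃ x u v, u ∈ dualityMapL1 x ∧ v ∈ dualityMapL1 x ∧ d = u - v}) :=
      Submodule.subset_span ⟨_, a, b, ha, hb, rfl⟩
    have hmem2 : c - d ∈ (Submodule.span ℝ {d : lp (fun _ : ℕ => ℝ) ⊤ |
        ∃ x u v, u ∈ dualityMapL1 x ∧ v ∈ dualityMapL1 x ∧ d = u - v}) :=
      Submodule.subset_span ⟨_, c, d, hc, hd, rfl⟩
    have htz : t • z ∈ (Submodule.span ℝ {d : lp (fun _ : ℕ => ℝ) ⊤ |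
        ∃ x u v, u ∈ dualityMapL1 x ∧ v ∈ dualityMapL1 x ∧ d = u - v}) := by
      rw [heq, show a - b + c - d = (a - b) + (c - d) from by abel]
      exact Submodule.add_mem _ hmem1 hmem2
    have : z = t⁻¹ • (t • z) := by
      rw [smul_smul, inv_mul_cancel₀ (ne_of_gt htpos), one_smul]
    rw [this]
    exact Submodule.smul_mem _ _ htz
  rw [hspan]
  exact le_antisymm le_top (Submodule.le_topologicalClosure ⊤)
end

section
/- Let X be a rugged real Banach space (i.e., the closed linear span of ran(J − J) equals X*, where J is the duality mapping), let A : X → X* be a linear operator, and let λ > 0. Then the closed convex hull of the closure of the range of A + λJ equals X*. -/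
open NormedSpace

lemma smul_mem_dualityMap {X : Type*} [NormedAddCommGroup X] [NormedSpace ℝ X]
    {x : X} {u : StrongDual ℝ X} (h : u ∈ dualityMap x) (t : ℝ) :
    t • u ∈ dualityMap (t • x) := by
  obtain ⟨h1, h2⟩ := h
  constructor
  · simp only [ContinuousLinearMap.smul_apply, map_smul, smul_eq_mul]
    rw [norm_smul]
    calc t * (t * u x) = t^2 * (u x) := by ring
    _ = t^2 * ‖x‖^2 := by rw [h1]
    _ = (‖t‖ * ‖x‖)^2 := by rw [mul_pow, Real.norm_eq_abs, sq_abs]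
  · rw [norm_smul, norm_smul, mul_pow, mul_pow, h2]

theorem stmt12 {X : Type*} [NormedAddCommGroup X] [NormedSpace ℝ X] [CompleteSpace X]
    (hrugged : (Submodule.span ℝ {d : StrongDual ℝ X |
        ∃ x u v, u ∈ dualityMap x ∧ v ∈ dualityMap x ∧ d = u - v}).topologicalClosure = ⊤)
    (A : X →ₗ[ℝ] StrongDual ℝ X) (lam : ℝ) (hlam : 0 < lam) :
    closure (convexHull ℝ
        (closure {f : StrongDual ℝ X | ∃ x xs, xs ∈ dualityMap x ∧ f = A x + lam • xs}))
      = Set.univ := by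
  set R : Set (StrongDual ℝ X) :=
    {f : StrongDual ℝ X | ∃ x xs, xs ∈ dualityMap x ∧ f = A x + lam • xs} with hR
  by_contra hne
  obtain ⟨f₀, hf₀⟩ : ∃ f₀, f₀ ∉ closure (convexHull ℝ (closure R)) := by
    by_contra h
    push_neg at h
    exact hne (Set.eq_univ_of_forall h)
  obtain ⟨φ, c, hφs, hφf₀⟩ :=
    geometric_hahn_banach_closed_point
      ((convex_convexHull ℝ (closure R)).closure) isClosed_closure hf₀
  -- every element of R satisfies φ < c
  have hRlt : ∀ g ∈ R, φ g < c := fun g hg =>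
    hφs g (subset_closure (subset_convexHull ℝ _ (subset_closure hg)))
  -- 0 ∈ R
  have h0R : (0 : StrongDual ℝ X) ∈ R := by
    refine ⟨0, 0, ⟨by simp, by simp⟩, by simp⟩
  have hc : 0 < c := by simpa using hRlt 0 h0R
  -- key: φ (A x) + lam * φ u = 0 for all u ∈ J x
  have key : ∀ (x : X) (u : StrongDual ℝ X), u ∈ dualityMap x → φ (A x) + lam * φ u = 0 := by
    intro x u hu
    set K := φ (A x) + lam * φ u with hK
    by_contra hKne
    have ht : ∀ t : ℝ, t * K < c := by
      intro t
      have hmem : A (t • x) + lam • (t • u) ∈ R :=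
        ⟨t • x, t • u, smul_mem_dualityMap hu t, rfl⟩
      have := hRlt _ hmem
      have : φ (A (t • x)) + lam * φ (t • u) < c := by
        simpa [map_smul, smul_eq_mul] using this
      simp only [map_smul, smul_eq_mul] at this
      have htK : t * K = t * φ (A x) + lam * (t * φ u) := by rw [hK]; ring
      linarith
    have := ht (c / K)
    rw [div_mul_cancel₀ c hKne] at this
    exact lt_irrefl c this
  -- φ vanishes on all differences u - v
  have hdiff : ∀ d ∈ {d : StrongDual ℝ X |
      ∃ x u v, u ∈ dualityMap x ∧ v ∈ dualityMap x ∧ d = u - v}, φ d = 0 := by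
    rintro d ⟨x, u, v, hu, hv, rfl⟩
    have h1 := key x u hu
    have h2 := key x v hv
    have : lam * φ u = lam * φ v := by linarith
    have : φ u = φ v := mul_left_cancel₀ (ne_of_gt hlam) this
    simp [map_sub, this]
  -- hence φ = 0 by ruggedness
  have hker : (Submodule.span ℝ {d : StrongDual ℝ X |
      ∃ x u v, u ∈ dualityMap x ∧ v ∈ dualityMap x ∧ d = u - v}).topologicalClosure ≤
      LinearMap.ker (φ : StrongDual ℝ X →ₗ[ℝ] ℝ) := by
    apply Submodule.topologicalClosure_minimal
    · rw [Submodule.span_le]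
      intro d hd
      exact hdiff d hd
    · exact ContinuousLinearMap.isClosed_ker φ
  rw [hrugged, top_le_iff] at hker
  have hφ0 : ∀ g, φ g = 0 := fun g => by
    have : g ∈ LinearMap.ker (φ : StrongDual ℝ X →ₗ[ℝ] ℝ) := hker ▸ Submodule.mem_top
    simpa using this
  have := hφf₀
  rw [hφ0 f₀] at this
  linarith
end

section
/- Let X be a rugged real Banach space, A : X → X* a linear operator, and λ > 0. Then the following are equivalent: (i) the closure of ran(A + λJ) equals X*; (ii) the closure of ran(A + λJ) is a linear subspace of X*; (iii) the closure of ran(A + λJ) is convex. -/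
open NormedSpace

lemma dualityMap_smul {X : Type*} [NormedAddCommGroup X] [NormedSpace ℝ X]
    {x : X} {f : StrongDual ℝ X} (t : ℝ) (hf : f ∈ dualityMap x) :
    t • f ∈ dualityMap (t • x) := by
  obtain ⟨h1, h2⟩ := hf
  constructor
  · have : (t • f) (t • x) = t * (t * f x) := by
      simp [ContinuousLinearMap.smul_apply, map_smul]
    rw [this, h1, norm_smul]
    simp [mul_pow, sq_abs]
    ring
  · rw [norm_smul, norm_smul, mul_pow, mul_pow, h2]

theorem stmt13 {X : Type*} [NormedAddCommGroup X] [NormedSpace ℝ X] [CompleteSpace X]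
    (hrugged : (Submodule.span ℝ {d : StrongDual ℝ X |
        ∃ x u v, u ∈ dualityMap x ∧ v ∈ dualityMap x ∧ d = u - v}).topologicalClosure = ⊤)
    (A : X →ₗ[ℝ] StrongDual ℝ X) (lam : ℝ) (hlam : 0 < lam) :
    let R := closure {f : StrongDual ℝ X | ∃ x xs, xs ∈ dualityMap x ∧ f = A x + lam • xs}
    (R = Set.univ ↔ ∃ p : Submodule ℝ (StrongDual ℝ X), R = ↑p) ∧
    ((∃ p : Submodule ℝ (StrongDual ℝ X), R = ↑p) ↔ Convex ℝ R) := by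
  intro R
  set S : Set (StrongDual ℝ X) :=
    {f : StrongDual ℝ X | ∃ x xs, xs ∈ dualityMap x ∧ f = A x + lam • xs} with hS
  -- S is closed under scalar multiplication
  have hSsmul : ∀ (t : ℝ), ∀ f ∈ S, t • f ∈ S := by
    rintro t f ⟨x, xs, hxs, rfl⟩
    refine ⟨t • x, t • xs, dualityMap_smul t hxs, ?_⟩
    rw [map_smul]
    module
  have hzeroS : (0 : StrongDual ℝ X) ∈ S := by
    refine ⟨0, 0, ⟨by simp, by simp⟩, by simp⟩
  -- R is closed under scalar multiplication
  have hRsmul : ∀ (t : ℝ), ∀ f ∈ R, t • f ∈ R := by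
    intro t f hf
    exact map_mem_closure (continuous_const_smul t) hf (fun g hg => hSsmul t g hg)
  have hSsubR : S ⊆ R := subset_closure
  -- (∃ p, R = p) → R = univ
  have key : (∃ p : Submodule ℝ (StrongDual ℝ X), R = ↑p) → R = Set.univ := by
    rintro ⟨p, hp⟩
    have hD : {d : StrongDual ℝ X |
        ∃ x u v, u ∈ dualityMap x ∧ v ∈ dualityMap x ∧ d = u - v} ⊆ ↑p := by
      rintro d ⟨x, u, v, hu, hv, rfl⟩
      have h1 : A x + lam • u ∈ p := by
        have := hSsubR ⟨x, u, hu, rfl⟩; rwa [hp] at this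
      have h2 : A x + lam • v ∈ p := by
        have := hSsubR ⟨x, v, hv, rfl⟩; rwa [hp] at this
      have h3 : lam • (u - v) ∈ p := by
        have := p.sub_mem h1 h2
        have he : (A x + lam • u) - (A x + lam • v) = lam • (u - v) := by module
        rwa [he] at this
      have := p.smul_mem lam⁻¹ h3
      rwa [inv_smul_smul₀ (ne_of_gt hlam)] at this
    have hspan : Submodule.span ℝ {d : StrongDual ℝ X |
        ∃ x u v, u ∈ dualityMap x ∧ v ∈ dualityMap x ∧ d = u - v} ≤ p :=
      Submodule.span_le.mpr hD
    have hclosed : IsClosed (p : Set (StrongDual ℝ X)) := hp ▸ isClosed_closure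
    have := Submodule.topologicalClosure_minimal _ hspan hclosed
    rw [hrugged, top_le_iff] at this
    rw [hp, this, Submodule.top_coe]
  -- Convex R → ∃ p
  have key2 : Convex ℝ R → ∃ p : Submodule ℝ (StrongDual ℝ X), R = ↑p := by
    intro hconv
    refine ⟨{ carrier := R
              zero_mem' := hSsubR hzeroS
              add_mem' := ?_
              smul_mem' := fun t f hf => hRsmul t f hf }, rfl⟩
    intro f g hf hg
    have h := hconv hf hg (by norm_num : (0:ℝ) ≤ 1/2) (by norm_num : (0:ℝ) ≤ 1/2)
      (by norm_num)
    have h2 := hRsmul 2 _ h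
    have he : (2:ℝ) • ((1/2:ℝ) • f + (1/2:ℝ) • g) = f + g := by
      rw [smul_add, smul_smul, smul_smul]
      norm_num
    rwa [he] at h2
  constructor
  · constructor
    · intro h
      exact ⟨⊤, by rw [h, Submodule.top_coe]⟩
    · exact key
  · constructor
    · rintro ⟨p, hp⟩
      rw [hp]
      exact p.convex
    · exact key2
end

section
/- Let X be a real Banach space, J its duality mapping, A : X → X* a bounded linear monotone operator with ‖A‖ = 1, and f* ∈ X* with ‖f*‖ = 1. Assume that for every λ > 0 and every ε > 0, whenever (Ax + λ·Jx) ∩ B̄(f*, ε) ≠ ∅ one has ⟨x, f*⟩ ≤ 3ε (the 'whs' condition). Then for every λ > 0, the distance from f* to ran(A + λJ) is at least m(λ) = (3λ² + 9λ + 4 − (λ+1)√(9λ² + 36λ + 16))/(4λ + 2) > 0. -/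
open NormedSpace

set_option maxHeartbeats 1000000 in
theorem stmt14 {X : Type*} [NormedAddCommGroup X] [NormedSpace ℝ X] [CompleteSpace X]
    (A : X →L[ℝ] StrongDual ℝ X)
    (hmono : ∀ x y : X, 0 ≤ (A x - A y) (x - y)) (hA : ‖A‖ = 1)
    (f : StrongDual ℝ X) (hf : ‖f‖ = 1)
    (hwhs : ∀ lam > (0:ℝ), ∀ ε > (0:ℝ), ∀ x : X,
      (∃ xs ∈ dualityMap x, ‖A x + lam • xs - f‖ ≤ ε) → f x ≤ 3 * ε)
    (lam : ℝ) (hlam : 0 < lam) :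
    Metric.infDist f {g : StrongDual ℝ X | ∃ x xs, xs ∈ dualityMap x ∧ g = A x + lam • xs} ≥
      (3 * lam ^ 2 + 9 * lam + 4 - (lam + 1) * Real.sqrt (9 * lam ^ 2 + 36 * lam + 16)) /
        (4 * lam + 2) ∧
    0 < (3 * lam ^ 2 + 9 * lam + 4 - (lam + 1) * Real.sqrt (9 * lam ^ 2 + 36 * lam + 16)) /
        (4 * lam + 2) := by
  set s : ℝ := Real.sqrt (9 * lam ^ 2 + 36 * lam + 16) with hs_def
  have hs0 : 0 ≤ s := Real.sqrt_nonneg _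
  have hs2 : s ^ 2 = 9 * lam ^ 2 + 36 * lam + 16 := Real.sq_sqrt (by positivity)
  have hsl : 3 * lam + 2 < s := by nlinarith [hs0, hs2]
  have hnum : 0 < 3 * lam ^ 2 + 9 * lam + 4 - (lam + 1) * s := by
    nlinarith [hs0, hs2, hlam, mul_nonneg (by linarith : (0:ℝ) ≤ lam + 1) hs0]
  have hden : (0:ℝ) < 4 * lam + 2 := by linarith
  have hm : 0 < (3 * lam ^ 2 + 9 * lam + 4 - (lam + 1) * s) / (4 * lam + 2) :=
    div_pos hnum hden
  refine ⟨?_, hm⟩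
  set m : ℝ := (3 * lam ^ 2 + 9 * lam + 4 - (lam + 1) * s) / (4 * lam + 2) with hm_def
  have hne : ({g : StrongDual ℝ X | ∃ x xs, xs ∈ dualityMap x ∧ g = A x + lam • xs}).Nonempty := by
    refine ⟨A 0 + lam • (0 : StrongDual ℝ X), 0, 0, ⟨?_, ?_⟩, rfl⟩ <;> simp
  rw [ge_iff_le]
  by_contra hcon
  push_neg at hcon
  obtain ⟨g, ⟨x, xs, hxs, rfl⟩, hdlt⟩ := (Metric.infDist_lt_iff hne).mp hcon
  set d : ℝ := dist f (A x + lam • xs) with hd_def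
  have hd0 : 0 ≤ d := dist_nonneg
  have hdm : d < m := hdlt
  set ε : ℝ := (d + m) / 2 with hε_def
  have hε0 : 0 < ε := by positivity
  have hdε : d ≤ ε := by simp only [hε_def]; linarith
  have hεm : ε < m := by simp only [hε_def]; linarith
  -- norm of the residual
  have hres : ‖A x + lam • xs - f‖ ≤ ε := by
    have : ‖A x + lam • xs - f‖ = d := by rw [hd_def, dist_eq_norm, norm_sub_rev]
    linarith
  have hfx : f x ≤ 3 * ε := hwhs lam hlam ε hε0 x ⟨xs, hxs, hres⟩
  set t : ℝ := ‖x‖ with ht_def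
  have ht0 : 0 ≤ t := norm_nonneg _
  have hxsn : ‖xs‖ = t := by
    have h2 := hxs.2
    have h1 : (0:ℝ) ≤ ‖xs‖ := norm_nonneg _
    nlinarith [h2, h1, ht0]
  -- A x x ≥ 0
  have hAxx : 0 ≤ A x x := by
    have h := hmono x 0
    simpa using h
  -- key1 : lam * t^2 ≤ ε * t + 3 * ε
  have heval : (A x + lam • xs - f) x = A x x + lam * (t ^ 2) - f x := by
    simp [ContinuousLinearMap.add_apply, ContinuousLinearMap.sub_apply,
      ContinuousLinearMap.smul_apply, hxs.1, ht_def]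
  have hop : (A x + lam • xs - f) x ≤ ε * t := by
    calc (A x + lam • xs - f) x ≤ ‖A x + lam • xs - f‖ * ‖x‖ :=
          le_trans (le_abs_self _) ((A x + lam • xs - f).le_opNorm x)
      _ ≤ ε * t := mul_le_mul_of_nonneg_right hres ht0
  have key1 : lam * t ^ 2 ≤ ε * t + 3 * ε := by
    rw [heval] at hop
    linarith
  -- key2 : 1 - ε ≤ (1 + lam) * t
  have key2 : 1 - ε ≤ (1 + lam) * t := by
    have h1 : ‖f‖ ≤ ‖f - (A x + lam • xs)‖ + ‖A x + lam • xs‖ := by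
      have := norm_sub_norm_le f (A x + lam • xs)
      linarith
    have h2 : ‖f - (A x + lam • xs)‖ ≤ ε := by
      rw [← dist_eq_norm]; exact hdε
    have h3 : ‖A x + lam • xs‖ ≤ (1 + lam) * t := by
      calc ‖A x + lam • xs‖ ≤ ‖A x‖ + ‖lam • xs‖ := norm_add_le _ _
        _ ≤ ‖A‖ * ‖x‖ + |lam| * ‖xs‖ := by
            rw [norm_smul, Real.norm_eq_abs]
            exact add_le_add_left (A.le_opNorm x) _
        _ = (1 + lam) * t := by rw [hA, abs_of_pos hlam, hxsn, ht_def]; ring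
    rw [hf] at h1
    linarith
  -- quadratic inequality from ε < m
  have hεnum : ε * (4 * lam + 2) < 3 * lam ^ 2 + 9 * lam + 4 - (lam + 1) * s :=
    (lt_div_iff₀ hden).mp hεm
  have hcpos : 0 < 3 * lam ^ 2 + 9 * lam + 4 - ε * (4 * lam + 2) := by
    have h0 : 0 ≤ (lam + 1) * s := mul_nonneg (by linarith) hs0
    linarith
  have hsq : 0 < (3 * lam ^ 2 + 9 * lam + 4 - ε * (4 * lam + 2) - (lam + 1) * s) *
      (3 * lam ^ 2 + 9 * lam + 4 - ε * (4 * lam + 2) + (lam + 1) * s) := by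
    apply mul_pos (by linarith)
    have : 0 ≤ (lam + 1) * s := mul_nonneg (by linarith) hs0
    linarith
  have hq : 0 < (2 * lam + 1) * ε ^ 2 - (3 * lam ^ 2 + 9 * lam + 4) * ε + lam := by
    nlinarith [hsq, hs2, hlam]
  -- ε < 1
  have hε1 : ε < 1 := by
    have h := mul_lt_mul_of_pos_left hsl (show (0:ℝ) < lam + 1 by linarith)
    nlinarith [hεnum, h]
  -- P form of the quadratic
  have hP : 0 < lam * (1 - ε) ^ 2 - (1 + lam) * (1 - ε) * ε - 3 * (1 + lam) ^ 2 * ε := by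
    nlinarith [hq]
  -- λ(1-ε) > (1+λ)ε
  have hεt : (1 + lam) * ε < lam * (1 - ε) := by
    nlinarith [hP, hε0, hε1, sq_nonneg (1 - ε)]
  -- the contradiction
  have hu : 0 ≤ (1 + lam) * t - (1 - ε) := by linarith
  have hw : 0 ≤ lam * ((1 + lam) * t + (1 - ε)) - (1 + lam) * ε := by
    nlinarith [hεt, mul_nonneg hlam.le ht0]
  have hprod := mul_nonneg hu hw
  have key1' : 0 ≤ (ε * t + 3 * ε - lam * t ^ 2) * (1 + lam) ^ 2 :=
    mul_nonneg (by linarith) (sq_nonneg _)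
  nlinarith [hprod, key1', hP]
end

section
/- The Gossez operator G : ℓ¹ → ℓ∞, defined by (Gx)ₙ = −Σ_{k<n} x_k + Σ_{k>n} x_k, is a bounded linear operator with ‖G‖ = 1 and is skew: ⟨x, Gx⟩ = 0 for every x ∈ ℓ¹ (in particular G is monotone). -/
noncomputable def gfun (x : ℕ → ℝ) (n : ℕ) : ℝ :=
  -(∑ k ∈ Finset.range n, x k) + ∑' k : ℕ, if n < k then x k else 0

lemma summable_ite_tail {x : ℕ → ℝ} (hx : Summable fun k => ‖x k‖) (n : ℕ) :
    Summable fun k => if n < k then x k else 0 := by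
  apply Summable.of_norm_bounded hx
  intro k; split <;> simp

lemma gfun_eq {x : ℕ → ℝ} (hx : Summable fun k => ‖x k‖) (n : ℕ) :
    gfun x n = (∑' k, x k) - 2 * (∑ k ∈ Finset.range n, x k) - x n := by
  have h2 : Summable fun k => if n < k then (0:ℝ) else x k := by
    apply Summable.of_norm_bounded hx; intro k; split <;> simp
  have key : (∑' k, x k) = (∑' k : ℕ, if n < k then x k else 0)
      + ∑' k : ℕ, if n < k then (0:ℝ) else x k := by
    rw [← Summable.tsum_add (summable_ite_tail hx n) h2]
    congr 1; funext k; split <;> ring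
  have hfin : (∑' k : ℕ, if n < k then (0:ℝ) else x k)
      = ∑ k ∈ Finset.range (n+1), x k := by
    rw [tsum_eq_sum (s := Finset.range (n+1)) ?_]
    · apply Finset.sum_congr rfl; intro k hk
      rw [Finset.mem_range] at hk
      rw [if_neg (by omega)]
    · intro k hk; rw [Finset.mem_range] at hk; rw [if_pos (by omega)]
  have : (∑' k : ℕ, if n < k then x k else 0)
      = (∑' k, x k) - ∑ k ∈ Finset.range (n+1), x k := by
    rw [key, hfin]; ring
  rw [gfun, this, Finset.sum_range_succ]; ring

lemma gfun_bound {x : ℕ → ℝ} (hx : Summable fun k => ‖x k‖) (n : ℕ) :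
    ‖gfun x n‖ ≤ ∑' k, ‖x k‖ := by
  set u : ℕ → ℝ := fun k => if k < n then ‖x k‖ else 0 with hu
  set v : ℕ → ℝ := fun k => if n < k then ‖x k‖ else 0 with hv
  have hus : Summable u := by
    apply Summable.of_norm_bounded hx; intro k
    simp only [hu]; split <;> simp
  have hvs : Summable v := by
    apply Summable.of_norm_bounded hx; intro k
    simp only [hv]; split <;> simp
  have hA : ‖∑ k ∈ Finset.range n, x k‖ ≤ ∑' k, u k := by
    calc ‖∑ k ∈ Finset.range n, x k‖ ≤ ∑ k ∈ Finset.range n, ‖x k‖ :=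
          norm_sum_le _ _
      _ = ∑' k, u k := by
          rw [tsum_eq_sum (s := Finset.range n) ?_]
          · apply Finset.sum_congr rfl; intro k hk
            rw [Finset.mem_range] at hk
            simp [hu, hk]
          · intro k hk; rw [Finset.mem_range] at hk; simp [hu, hk]
  have hT : ‖∑' k : ℕ, if n < k then x k else 0‖ ≤ ∑' k, v k := by
    refine (norm_tsum_le_tsum_norm ?_).trans_eq ?_
    · apply Summable.of_norm_bounded hx; intro k; split <;> simp
    · congr 1; funext k; simp only [hv]; split <;> simp
  have hsum : (∑' k, u k) + (∑' k, v k) ≤ ∑' k, ‖x k‖ := by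
    rw [← Summable.tsum_add hus hvs]
    apply Summable.tsum_le_tsum _ (hus.add hvs) hx
    intro k
    simp only [hu, hv]
    rcases lt_trichotomy k n with h | h | h
    · simp [h, h.not_gt, (by omega : ¬ n < k)]
    · simp [h]
    · simp [h, h.not_gt, (by omega : ¬ k < n)]
  calc ‖gfun x n‖ ≤ ‖∑ k ∈ Finset.range n, x k‖ + ‖∑' k : ℕ, if n < k then x k else 0‖ := by
        rw [gfun]; exact (norm_add_le _ _).trans (by rw [norm_neg])
    _ ≤ (∑' k, u k) + (∑' k, v k) := add_le_add hA hT
    _ ≤ ∑' k, ‖x k‖ := hsum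

lemma lp_summable (x : lp (fun _ : ℕ => ℝ) 1) : Summable fun k => ‖x k‖ := by
  have := lp.memℓp x
  rw [memℓp_gen_iff (by norm_num)] at this
  simpa using this

lemma lp_norm_eq (x : lp (fun _ : ℕ => ℝ) 1) : ‖x‖ = ∑' k, ‖x k‖ := by
  rw [lp.norm_eq_tsum_rpow (by norm_num) x]
  simp

noncomputable def Gmem (x : lp (fun _ : ℕ => ℝ) 1) : lp (fun _ : ℕ => ℝ) ⊤ :=
  ⟨gfun x, memℓp_infty ⟨∑' k, ‖x k‖, by
    rintro r ⟨n, rfl⟩; exact gfun_bound (lp_summable x) n⟩⟩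

lemma Gmem_apply (x : lp (fun _ : ℕ => ℝ) 1) (n : ℕ) : Gmem x n = gfun x n := rfl

noncomputable def Glin : lp (fun _ : ℕ => ℝ) 1 →ₗ[ℝ] lp (fun _ : ℕ => ℝ) ⊤ where
  toFun := Gmem
  map_add' x y := by
    apply lp.ext; funext n
    have hx := lp_summable x
    have hy := lp_summable y
    have hxy : Summable fun k => ‖(x + y : lp (fun _ : ℕ => ℝ) 1) k‖ := lp_summable _
    have hco : ∀ k, (x + y : lp (fun _ : ℕ => ℝ) 1) k = x k + y k := fun k => rfl
    show gfun (⇑(x + y)) n = gfun x n + gfun y n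
    rw [gfun_eq hxy, gfun_eq hx, gfun_eq hy]
    have h1 : (∑' k, (x + y : lp (fun _ : ℕ => ℝ) 1) k) = (∑' k, x k) + ∑' k, y k := by
      rw [← Summable.tsum_add hx.of_norm hy.of_norm]
      exact tsum_congr hco
    have h2 : (∑ k ∈ Finset.range n, (x + y : lp (fun _ : ℕ => ℝ) 1) k)
        = (∑ k ∈ Finset.range n, x k) + ∑ k ∈ Finset.range n, y k := by
      rw [← Finset.sum_add_distrib]; exact Finset.sum_congr rfl fun k _ => hco k
    rw [h1, h2, hco]; ring
  map_smul' c x := by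
    apply lp.ext; funext n
    have hx := lp_summable x
    have hcx : Summable fun k => ‖(c • x : lp (fun _ : ℕ => ℝ) 1) k‖ := lp_summable _
    have hco : ∀ k, (c • x : lp (fun _ : ℕ => ℝ) 1) k = c * x k := fun k => rfl
    show gfun (⇑(c • x)) n = c * gfun x n
    rw [gfun_eq hcx, gfun_eq hx]
    have h1 : (∑' k, (c • x : lp (fun _ : ℕ => ℝ) 1) k) = c * ∑' k, x k := by
      rw [← tsum_mul_left]; exact tsum_congr hco
    have h2 : (∑ k ∈ Finset.range n, (c • x : lp (fun _ : ℕ => ℝ) 1) k)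
        = c * ∑ k ∈ Finset.range n, x k := by
      rw [Finset.mul_sum]; exact Finset.sum_congr rfl fun k _ => hco k
    rw [h1, h2, hco]; ring

theorem stmt16 :
    ∃ G : lp (fun _ : ℕ => ℝ) 1 →L[ℝ] lp (fun _ : ℕ => ℝ) ⊤,
      (∀ x : lp (fun _ : ℕ => ℝ) 1, ∀ n : ℕ,
        G x n = -(∑ k ∈ Finset.range n, x k) + ∑' k : ℕ, if n < k then x k else 0) ∧
      ‖G‖ = 1 ∧
      ∀ x : lp (fun _ : ℕ => ℝ) 1, ∑' n, x n * G x n = 0 := by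
  have hbound : ∀ x : lp (fun _ : ℕ => ℝ) 1, ‖Glin x‖ ≤ 1 * ‖x‖ := by
    intro x
    rw [one_mul, lp_norm_eq x]
    apply lp.norm_le_of_forall_le
    · exact tsum_nonneg fun k => norm_nonneg _
    · intro n; exact gfun_bound (lp_summable x) n
  set G : lp (fun _ : ℕ => ℝ) 1 →L[ℝ] lp (fun _ : ℕ => ℝ) ⊤ :=
    Glin.mkContinuous 1 hbound with hG
  have happly : ∀ (x : lp (fun _ : ℕ => ℝ) 1) (n : ℕ), G x n = gfun x n := fun _ _ => rfl
  refine ⟨G, fun x n => happly x n, ?_, ?_⟩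
  · -- norm = 1
    apply le_antisymm
    · simpa using Glin.mkContinuous_norm_le (by norm_num) hbound
    · set e : lp (fun _ : ℕ => ℝ) 1 := lp.single 1 0 (1 : ℝ) with he
      have hnorm_e : ‖e‖ = 1 := by
        have := lp.norm_single (E := fun _ : ℕ => ℝ) (p := 1) (by norm_num) 0 (1 : ℝ)
        rw [he, this, norm_one]
      have he0 : e 0 = 1 := by rw [he]; exact lp.single_apply_self (E := fun _ : ℕ => ℝ) 1 0 (1 : ℝ)
      have hek : ∀ k : ℕ, k ≠ 0 → e k = 0 := by
        intro k hk; rw [he]; exact lp.single_apply_ne (E := fun _ : ℕ => ℝ) 1 0 _ hk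
      have hGe1 : G e 1 = -1 := by
        rw [happly, gfun]
        have h1 : (∑ k ∈ Finset.range 1, e k) = 1 := by simp [he0]
        have h2 : (∑' k : ℕ, if 1 < k then e k else 0) = 0 := by
          have : (fun k : ℕ => if 1 < k then e k else 0) = fun _ => 0 := by
            funext k
            split
            · exact hek k (by omega)
            · rfl
          rw [this, tsum_zero]
        rw [h1, h2]; ring
      have h1 : (1 : ℝ) ≤ ‖G e‖ := by
        have := lp.norm_apply_le_norm (E := fun _ : ℕ => ℝ) ENNReal.top_ne_zero (G e) 1
        rw [hGe1, norm_neg, norm_one] at this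
        exact this
      have := (G.le_opNorm e)
      rw [hnorm_e, mul_one] at this
      linarith
  · -- skew
    intro x
    have hx := lp_summable x
    set S : ℝ := ∑' k, x k with hS
    set f : ℕ → ℝ := fun n => ∑ k ∈ Finset.range n, x k with hf
    have hftend : Filter.Tendsto f Filter.atTop (nhds S) := hx.of_norm.hasSum.tendsto_sum_nat
    set t : ℕ → ℝ := fun n => f (n + 1) ^ 2 - f n ^ 2 with ht
    have hfb : ∀ n, |f n| ≤ ∑' k, ‖x k‖ := by
      intro n
      calc |f n| ≤ ∑ k ∈ Finset.range n, ‖x k‖ := by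
            simpa using norm_sum_le (Finset.range n) x
        _ ≤ ∑' k, ‖x k‖ := Summable.sum_le_tsum _ (fun k _ => norm_nonneg _) hx
    have hxb : ∀ n, ‖x n‖ ≤ ∑' k, ‖x k‖ := fun n =>
      Summable.le_tsum hx n fun k _ => norm_nonneg _
    have ht_eq : ∀ n, t n = 2 * f n * x n + x n ^ 2 := by
      intro n
      simp only [ht, hf, Finset.sum_range_succ]
      ring
    have hts : Summable t := by
      apply Summable.of_norm_bounded (g := fun n => (3 * ∑' k, ‖x k‖) * ‖x n‖) (hx.mul_left _)
      intro n
      rw [ht_eq n]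
      have h1 : |2 * f n * x n| ≤ 2 * (∑' k, ‖x k‖) * ‖x n‖ := by
        rw [abs_mul, abs_mul]
        have := hfb n
        have hx0 : (0:ℝ) ≤ ∑' k, ‖x k‖ := tsum_nonneg fun k => norm_nonneg _
        simp only [abs_two, Real.norm_eq_abs] at *
        nlinarith [abs_nonneg (x n), abs_nonneg (f n)]
      have h2 : |x n ^ 2| ≤ (∑' k, ‖x k‖) * ‖x n‖ := by
        rw [abs_pow, sq]
        have := hxb n
        simp only [Real.norm_eq_abs] at *
        nlinarith [abs_nonneg (x n)]
      calc ‖2 * f n * x n + x n ^ 2‖ ≤ |2 * f n * x n| + |x n ^ 2| := abs_add_le _ _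
        _ ≤ 2 * (∑' k, ‖x k‖) * ‖x n‖ + (∑' k, ‖x k‖) * ‖x n‖ := add_le_add h1 h2
        _ = (3 * ∑' k, ‖x k‖) * ‖x n‖ := by ring
    have ht_tsum : ∑' n, t n = S ^ 2 := by
      have : HasSum t (S ^ 2) := by
        rw [hts.hasSum_iff_tendsto_nat]
        have hpart : ∀ n : ℕ, ∑ i ∈ Finset.range n, t i = f n ^ 2 := by
          intro n
          have := Finset.sum_range_sub (fun i => f i ^ 2) n
          simp only [ht]
          rw [this]
          simp [hf]
        simp only [hpart]
        exact (hftend.pow 2)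
      exact this.tsum_eq
    have hterm : ∀ n, x n * G x n = x n * S - t n := by
      intro n
      rw [happly, gfun_eq hx, ht_eq n]
      simp only [hf, hS]
      ring
    have hxS : Summable fun n => x n * S := hx.of_norm.mul_right S
    calc (∑' n, x n * G x n) = ∑' n, (x n * S - t n) := tsum_congr hterm
      _ = (∑' n, x n * S) - ∑' n, t n := Summable.tsum_sub hxS hts
      _ = S * S - S ^ 2 := by rw [tsum_mul_right, ht_tsum, ← hS]
      _ = 0 := by ring
end

section
/- The Gossez operator G on ℓ¹ together with f* = −(1,1,1,...) ∈ ℓ∞ satisfies the whs condition: for every λ > 0 and ε > 0, if x ∈ ℓ¹ and there exists x* ∈ Jx with ‖Gx + λx* − f*‖∞ ≤ ε, then ⟨x, f*⟩ ≤ 3ε. Consequently, for every λ > 0, the closure of ran(G + λJ) in ℓ∞ is not convex, while its closed convex hull equals ℓ∞. -/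
open scoped ENNReal
set_option maxHeartbeats 1000000
set_option synthInstance.maxHeartbeats 400000

section GossezAux

lemma l1_hasSum_abs (x : lp (fun _ : ℕ => ℝ) 1) : HasSum (fun n => |x n|) ‖x‖ := by
  have h := lp.hasSum_norm (p := 1) (by norm_num) x
  simpa using h

lemma l1_summable (x : lp (fun _ : ℕ => ℝ) 1) : Summable (fun n => x n) :=
  summable_abs_iff.mp (l1_hasSum_abs x).summable

lemma linf_apply_le (y : lp (fun _ : ℕ => ℝ) (⊤:ℝ≥0∞)) (n : ℕ) : |y n| ≤ ‖y‖ := by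
  simpa using lp.norm_apply_le_norm (E := fun _ : ℕ => ℝ) ENNReal.top_ne_zero y n

lemma tail_hasSum (x : ℕ → ℝ) {s : ℝ} (hs : HasSum x s) (n : ℕ) :
    HasSum (fun k => if n < k then x k else 0) (s - ∑ k ∈ Finset.range (n+1), x k) := by
  have h2 : HasSum (fun k => if n < k then (0:ℝ) else x k) (∑ k ∈ Finset.range (n+1), x k) := by
    have hz : ∀ k ∉ Finset.range (n+1), (if n < k then (0:ℝ) else x k) = 0 := by
      intro k hk
      simp only [Finset.mem_range, not_lt] at hk
      rw [if_pos (by omega)]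
    have h : HasSum (fun k => if n < k then (0:ℝ) else x k)
        (∑ k ∈ Finset.range (n+1), (if n < k then (0:ℝ) else x k)) := hasSum_sum_of_ne_finset_zero hz
    have he : ∑ k ∈ Finset.range (n+1), (if n < k then (0:ℝ) else x k)
        = ∑ k ∈ Finset.range (n+1), x k := by
      refine Finset.sum_congr rfl fun k hk => ?_
      simp only [Finset.mem_range] at hk
      rw [if_neg (by omega)]
    rwa [he] at h
  have h3 := hs.sub h2
  refine h3.congr_fun fun k => ?_
  by_cases h : n < k <;> simp [h]

lemma gossez_key (lam ε : ℝ) (hlam : 0 < lam) (hε : 0 < ε)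
    (x : lp (fun _ : ℕ => ℝ) 1) (xs : lp (fun _ : ℕ => ℝ) (⊤:ℝ≥0∞))
    (hpair : ∑' n, x n * xs n = ‖x‖ ^ 2) (hnx : ‖x‖ ^ 2 = ‖xs‖ ^ 2)
    (hcoord : ∀ n : ℕ,
      |(-(∑ k ∈ Finset.range n, x k) + ∑' k : ℕ, if n < k then x k else 0) + lam * xs n + 1| ≤ ε) :
    |lam * ‖x‖ ^ 2 + (∑' n, x n)| ≤ ε * ‖x‖ ∧ 1 - (∑' n, x n) - ε ≤ lam * ‖x‖ ∧
      -(∑' n, x n) ≤ 3 * ε := by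
  set a : ℝ := ‖x‖ with ha_def
  set σ : ℕ → ℝ := fun n => ∑ k ∈ Finset.range n, x k with hσ_def
  have habs : HasSum (fun n => |x n|) a := l1_hasSum_abs x
  have hsx : Summable (fun n => x n) := l1_summable x
  set s : ℝ := ∑' n, x n with hs_def
  have hs : HasSum (fun n => x n) s := hsx.hasSum
  have ha0 : 0 ≤ a := norm_nonneg x
  have hσa : ∀ n, |σ n| ≤ a := by
    intro n
    calc |σ n| ≤ ∑ k ∈ Finset.range n, |x k| := Finset.abs_sum_le_sum_abs _ _
    _ ≤ a := sum_le_hasSum _ (fun i _ => abs_nonneg _) habs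
  have hσsucc : ∀ n, σ (n+1) = σ n + x n := by
    intro n; simp [hσ_def, Finset.sum_range_succ]
  have hnxs : ‖xs‖ = a := by
    have h1 : (0:ℝ) ≤ ‖xs‖ := norm_nonneg _
    nlinarith [hnx]
  have hxsb : ∀ n, |xs n| ≤ a := fun n => hnxs ▸ linf_apply_le xs n
  -- the coordinate error terms
  set e : ℕ → ℝ := fun n =>
    (-(σ n) + ∑' k : ℕ, if n < k then x k else 0) + lam * xs n + 1 with he_def
  have he : ∀ n, |e n| ≤ ε := hcoord
  have hlxs : ∀ n, lam * xs n = e n - 1 - s + σ n + σ (n+1) := by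
    intro n
    have ht := (tail_hasSum (fun k => x k) hs n).tsum_eq
    simp only [he_def]
    rw [ht]
    simp only [hσ_def]
    ring
  -- pointwise duality
  have hxxs_sum : Summable (fun n => x n * xs n) := by
    refine Summable.of_norm_bounded (habs.summable.mul_right a) ?_
    intro n
    simp only [Real.norm_eq_abs, abs_mul]
    exact mul_le_mul_of_nonneg_left (hxsb n) (abs_nonneg _)
  have hpt : ∀ n, x n * xs n = |x n| * a := by
    intro n
    by_contra hne
    have hglt : ∀ m, 0 ≤ |x m| * a - x m * xs m := by
      intro m
      have : x m * xs m ≤ |x m| * a := by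
        calc x m * xs m ≤ |x m * xs m| := le_abs_self _
        _ = |x m| * |xs m| := abs_mul _ _
        _ ≤ |x m| * a := mul_le_mul_of_nonneg_left (hxsb m) (abs_nonneg _)
      linarith
    have hgsum : Summable (fun m => |x m| * a - x m * xs m) :=
      (habs.summable.mul_right a).sub hxxs_sum
    have hgt : 0 < |x n| * a - x n * xs n := lt_of_le_of_ne (hglt n) (by
      intro h; exact hne (by linarith [h.symm]))
    have hpos := Summable.tsum_pos hgsum hglt n hgt
    have hzero : ∑' m, (|x m| * a - x m * xs m) = 0 := by
      rw [Summable.tsum_sub (habs.summable.mul_right a) hxxs_sum]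
      rw [tsum_mul_right, habs.tsum_eq, hpair]
      ring
    linarith
  -- skew term
  have hd_sum : Summable (fun n => σ (n+1)^2 - σ n^2) := by
    refine Summable.of_norm_bounded (habs.summable.mul_right (2*a)) ?_
    intro n
    have : σ (n+1)^2 - σ n^2 = x n * (σ (n+1) + σ n) := by
      rw [hσsucc n]; ring
    rw [Real.norm_eq_abs, this, abs_mul]
    refine mul_le_mul_of_nonneg_left ?_ (abs_nonneg _)
    calc |σ (n+1) + σ n| ≤ |σ (n+1)| + |σ n| := abs_add_le _ _
    _ ≤ 2 * a := by linarith [hσa n, hσa (n+1)]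
  have hσs : Filter.Tendsto σ Filter.atTop (nhds s) := hs.tendsto_sum_nat
  have hd : HasSum (fun n => σ (n+1)^2 - σ n^2) (s^2) := by
    have h1 := hd_sum.hasSum
    have h2 := h1.tendsto_sum_nat
    have h3 : ∀ N, ∑ n ∈ Finset.range N, (σ (n+1)^2 - σ n^2) = σ N ^ 2 := by
      intro N
      rw [Finset.sum_range_sub (fun n => σ n ^ 2)]
      simp [hσ_def]
    have h4 : Filter.Tendsto (fun N => σ N ^ 2) Filter.atTop
        (nhds (∑' n, (σ (n+1)^2 - σ n^2))) := by
      refine h2.congr fun N => h3 N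
    have h5 : Filter.Tendsto (fun N => σ N ^ 2) Filter.atTop (nhds (s^2)) := hσs.pow 2
    have h6 := tendsto_nhds_unique h4 h5
    rwa [h6] at h1
  have hskew : HasSum (fun n => x n * (s - σ n - σ (n+1))) 0 := by
    have h1 := (hs.mul_right s).sub hd
    have h2 : ∀ n, x n * s - (σ (n+1)^2 - σ n^2) = x n * (s - σ n - σ (n+1)) := by
      intro n; rw [hσsucc n]; ring
    have h3 : s * s - s^2 = 0 := by ring
    rw [h3] at h1
    exact h1.congr_fun (fun n => (h2 n).symm)
  -- (A)
  have hGform : ∀ n, (-(σ n) + ∑' k : ℕ, if n < k then x k else 0) = s - σ n - σ (n+1) := by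
    intro n
    have ht := (tail_hasSum (fun k => x k) hs n).tsum_eq
    rw [ht]; simp only [hσ_def]; ring
  have hxe : HasSum (fun n => x n * e n) (lam * a^2 + s) := by
    have h1 : HasSum (fun n => lam * (|x n| * a)) (lam * (a * a)) :=
      ((habs.mul_right a).mul_left lam)
    have h2 := (hskew.add h1).add hs
    have h3 : (0 : ℝ) + lam * (a * a) + s = lam * a^2 + s := by ring
    rw [h3] at h2
    refine h2.congr_fun fun n => ?_
    simp only [he_def]
    rw [hGform n, ← hpt n]
    ring
  have hxe_abs_sum : Summable (fun n => |x n * e n|) := by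
    refine Summable.of_nonneg_of_le (fun n => abs_nonneg _) (fun n => ?_)
      (habs.summable.mul_right ε)
    rw [abs_mul]
    exact mul_le_mul_of_nonneg_left (he n) (abs_nonneg _)
  have hA : |lam * a^2 + s| ≤ ε * a := by
    rw [← hxe.tsum_eq]
    calc |∑' n, x n * e n| ≤ ∑' n, |x n * e n| := by
          have := norm_tsum_le_tsum_norm (f := fun n => x n * e n)
            (by simp only [Real.norm_eq_abs]; exact hxe_abs_sum)
          simp only [Real.norm_eq_abs] at this
          exact this
    _ ≤ ∑' n, |x n| * ε := by
          refine Summable.tsum_le_tsum (fun n => ?_) hxe_abs_sum (habs.summable.mul_right ε)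
          rw [abs_mul]
          exact mul_le_mul_of_nonneg_left (he n) (abs_nonneg _)
    _ = a * ε := (habs.mul_right ε).tsum_eq
    _ = ε * a := mul_comm _ _
  -- (T)
  have hTn : ∀ n, 1 + s - σ n - σ (n+1) - ε ≤ lam * a := by
    intro n
    have h1 : lam * |xs n| ≤ lam * a := mul_le_mul_of_nonneg_left (hxsb n) hlam.le
    have h2 : |lam * xs n| = lam * |xs n| := by
      rw [abs_mul, abs_of_pos hlam]
    have h3 : |e n - 1 - s + σ n + σ (n+1)| ≤ lam * a := by
      rw [← hlxs n, h2] at *; exact h1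
    have h4 : 1 + s - σ n - σ (n+1) - ε ≤ |e n - 1 - s + σ n + σ (n+1)| := by
      have h5 : -(e n - 1 - s + σ n + σ (n+1)) ≤ |e n - 1 - s + σ n + σ (n+1)| :=
        neg_le_abs _
      have h6 := he n
      have h7 := abs_le.mp h6
      linarith [h7.1, h7.2]
    linarith
  have hT : 1 - s - ε ≤ lam * a := by
    have hσs1 : Filter.Tendsto (fun n => σ (n+1)) Filter.atTop (nhds s) :=
      hσs.comp (Filter.tendsto_add_atTop_nat 1)
    have hlim : Filter.Tendsto (fun n => 1 + s - σ n - σ (n+1) - ε) Filter.atTop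
        (nhds (1 + s - s - s - ε)) := by
      exact ((((tendsto_const_nhds.add tendsto_const_nhds).sub hσs).sub hσs1).sub
        tendsto_const_nhds).congr (fun n => by ring_nf)
    have h2 : (1 : ℝ) + s - s - s - ε = 1 - s - ε := by ring
    rw [h2] at hlim
    exact le_of_tendsto hlim (Filter.Eventually.of_forall hTn)
  refine ⟨hA, hT, ?_⟩
  -- final claim
  by_contra hu
  push_neg at hu
  have hsabs : |s| ≤ a := by
    rw [hs_def]
    have := norm_tsum_le_tsum_norm (f := fun n => x n)
      (by simp only [Real.norm_eq_abs]; exact habs.summable)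
    simp only [Real.norm_eq_abs] at this
    rw [habs.tsum_eq] at this
    exact this
  have hapos : 0 < a := by
    rcases eq_or_lt_of_le ha0 with h | h
    · exfalso
      have : |s| ≤ 0 := by rw [← h] at hsabs; exact hsabs
      have hs0 : s = 0 := abs_eq_zero.mp (le_antisymm this (abs_nonneg _))
      rw [hs0] at hu; simp at hu; linarith
    · exact h
  set P : ℝ := (a + s)/2 with hP_def
  have hPsum : HasSum (fun n => max (x n) 0) P := by
    have h1 := (hs.add habs).div_const 2
    have h2 : ∀ n, (x n + |x n|)/2 = max (x n) 0 := by
      intro n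
      rcases le_total 0 (x n) with h | h
      · rw [abs_of_nonneg h, max_eq_left h]; ring
      · rw [abs_of_nonpos h, max_eq_right h]; ring
    have h3 : HasSum (fun n => (x n + |x n|)/2) P := by
      rw [hP_def, add_comm]; exact h1
    exact h3.congr_fun (fun n => (h2 n).symm)
  have hσP : ∀ n, σ n ≤ P := by
    intro n
    calc σ n ≤ ∑ k ∈ Finset.range n, max (x k) 0 :=
          Finset.sum_le_sum (fun k _ => le_max_left _ _)
    _ ≤ P := sum_le_hasSum _ (fun k _ => le_max_right _ _) hPsum
  have h2P : 2 * P = a + s := by rw [hP_def]; ring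
  have hsupp : ∀ n, 0 < x n → x n ≤ a + s - 2 + 2*ε := by
    intro n hxn
    have hxsn : xs n = a := by
      have h := hpt n
      rw [abs_of_pos hxn] at h
      exact mul_left_cancel₀ (ne_of_gt hxn) h
    have h1 := hlxs n
    rw [hxsn] at h1
    have h2 := (abs_le.mp (he n)).2
    have h3 : σ (n+1) ≤ P := hσP (n+1)
    have h4 : σ n ≤ P - x n := by
      have h5 := hσP (n+1)
      rw [hσsucc n] at h5
      linarith
    linarith [hT]
  by_cases hP1 : 2*P ≤ 2 - 2*ε
  · have hneg : ∀ n, x n ≤ 0 := by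
      intro n
      by_contra h
      push_neg at h
      have := hsupp n h
      linarith
    have hP0 : P = 0 := by
      refine hPsum.unique ?_
      have : (fun n => max ((x : ℕ → ℝ) n) 0) = fun _ => (0:ℝ) := by
        funext n; exact max_eq_right (hneg n)
      rw [this]
      exact hasSum_zero
    have hsa : s = -a := by
      rw [hP0] at h2P; linarith
    have h5 : lam * a ≤ 1 + ε := by
      have h6 := (abs_le.mp hA).2
      rw [hsa] at h6
      nlinarith
    have h6 : 1 + a - ε ≤ lam * a := by
      rw [hsa] at hT; linarith
    rw [hsa] at hu
    linarith
  · push_neg at hP1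
    have h7 : lam * a^2 ≤ ε*a - s := by linarith [(abs_le.mp hA).2]
    have h8 : a * (1 - s - ε) ≤ lam * a^2 := by
      have h9 : 0 ≤ 1 - s - ε := by linarith
      nlinarith [hT, ha0]
    have h9 : a*(1 - s - 2*ε) ≤ -s := by nlinarith
    have h10 : 2 - 2*ε - s < a := by linarith [h2P]
    nlinarith [sq_nonneg (-s + 1 - 2*ε), hu, hε, sq_nonneg (-s - 3*ε)]


lemma far_from (lam ε a s : ℝ) (hlam : 0 < lam) (hε : 0 < ε) (hε1 : ε ≤ 1/8)
    (hε2 : ε ≤ lam/8) (hε3 : 20*lam*ε ≤ 1) (ha : 0 ≤ a)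
    (hA : |lam*a^2+s| ≤ ε*a) (hT : 1-s-ε ≤ lam*a) (hC : -s ≤ 3*ε) : False := by
  have hA2 := (abs_le.mp hA).2
  have h1 : lam*a^2 ≤ ε*(a+3) := by nlinarith
  have h2 : a^2 ≤ (a+3)/8 := by nlinarith [mul_le_mul_of_nonneg_right hε2 (show (0:ℝ) ≤ a+3 by linarith)]
  have h3 : a < 2 := by nlinarith
  have h4 : s ≤ ε*a := by nlinarith [mul_nonneg hlam.le (sq_nonneg a)]
  have h5 : 5/8 ≤ lam * a := by nlinarith
  have h6 : (5:ℝ)/8*a ≤ ε*(a+3) := by nlinarith [mul_le_mul_of_nonneg_right h5 ha]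
  have h7 : a ≤ 8*ε := by nlinarith
  have h8 : lam * a ≤ 2/5 := by nlinarith [mul_le_mul_of_nonneg_left h7 hlam.le]
  linarith

lemma build_point (G : lp (fun _ : ℕ => ℝ) 1 →L[ℝ] lp (fun _ : ℕ => ℝ) ⊤)
    (hG : ∀ x : lp (fun _ : ℕ => ℝ) 1, ∀ n : ℕ,
      G x n = -(∑ k ∈ Finset.range n, x k) + ∑' k : ℕ, if n < k then x k else 0)
    (lam : ℝ) (hlam : 0 < lam) (y : lp (fun _ : ℕ => ℝ) (⊤:ℝ≥0∞)) (m : ℕ)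
    (ι : ℝ) (hι : ι = 1 ∨ ι = -1) :
    ∃ x : lp (fun _ : ℕ => ℝ) 1, ∃ xs : lp (fun _ : ℕ => ℝ) (⊤:ℝ≥0∞),
      xs ∈ dualityMapL1 x ∧
      ∀ n, (G x + lam • xs) n =
        if n = m then ι * ((‖y‖+1)/lam) * lam
        else (if n < m then ι * ((‖y‖+1)/lam) else -(ι * ((‖y‖+1)/lam))) + y n := by
  set t : ℝ := (‖y‖+1)/lam with ht_def
  have hy0 : (0:ℝ) ≤ ‖y‖ := norm_nonneg _
  have ht : 0 < t := by positivity
  have hι1 : |ι| = 1 := by rcases hι with h | h <;> simp [h]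
  have hι2 : ι * ι = 1 := by rcases hι with h | h <;> simp [h]
  set x : lp (fun _ : ℕ => ℝ) 1 := lp.single 1 m (ι * t) with hx_def
  have hxk : ∀ k, x k = if k = m then ι*t else 0 := by
    intro k
    by_cases h : k = m
    · subst h; simp [hx_def, lp.single_apply_self]
    · simp [hx_def, lp.single_apply_ne 1 m _ h, h]
  set u : ℕ → ℝ := fun n => if n = m then ι*t else y n / lam with hu_def
  have hub : ∀ n, |u n| ≤ t := by
    intro n
    by_cases h : n = m
    · simp [hu_def, h, abs_mul, hι1, abs_of_pos ht]
    · simp only [hu_def, if_neg h]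
      rw [abs_div, abs_of_pos hlam, ht_def]
      gcongr
      calc |y n| ≤ ‖y‖ := linf_apply_le y n
        _ ≤ ‖y‖ + 1 := by linarith

  have humem : Memℓp u (⊤:ℝ≥0∞) := by
    apply memℓp_infty
    refine ⟨t, ?_⟩
    rintro v ⟨n, rfl⟩
    simpa using hub n
  set xs : lp (fun _ : ℕ => ℝ) (⊤:ℝ≥0∞) := ⟨u, humem⟩ with hxs_def
  have hxsk : ∀ n, xs n = u n := fun n => rfl
  have hxnorm : ‖x‖ = t := by
    have h := lp.norm_single (p := 1) (E := fun _ : ℕ => ℝ) (by norm_num) m (ι * t)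
    rw [hx_def]
    rw [h]
    simp [abs_mul, hι1, abs_of_pos ht]
  have hxsnorm : ‖xs‖ = t := by
    refine le_antisymm (lp.norm_le_of_forall_le ht.le fun n => by simpa using hub n) ?_
    have h := linf_apply_le xs m
    rw [hxsk m] at h
    simp only [hu_def, if_pos rfl] at h
    rwa [abs_mul, hι1, one_mul, abs_of_pos ht] at h
  refine ⟨x, xs, ⟨?_, ?_⟩, ?_⟩
  · have h1 : ∑' n, x n * xs n = x m * xs m := by
      refine tsum_eq_single m ?_
      intro n hn
      rw [hxk n, if_neg hn, zero_mul]
    rw [h1, hxk m, if_pos rfl, hxsk m, hxnorm]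
    have hum : u m = ι*t := by simp [hu_def]
    rw [hum]
    nlinarith [hι2]
  · rw [hxnorm, hxsnorm]
  · intro n
    have hGxn : G x n = (if n < m then ι*t else 0) - (if m < n then ι*t else 0) := by
      rw [hG x n]
      have hsum : ∑ k ∈ Finset.range n, x k = if m < n then ι*t else 0 := by
        have : ∀ k ∈ Finset.range n, x k = if k = m then ι*t else 0 :=
          fun k _ => hxk k
        rw [Finset.sum_congr rfl this, Finset.sum_ite_eq' (Finset.range n) m (fun _ => ι*t)]
        simp [Finset.mem_range]
      have htsum : ∑' k : ℕ, (if n < k then x k else 0) = if n < m then ι*t else 0 := by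
        have h2 : ∑' k : ℕ, (if n < k then x k else 0) = (if n < m then x m else 0) := by
          refine tsum_eq_single m ?_
          intro k hk
          rw [hxk k, if_neg hk]
          simp
        rw [h2, hxk m, if_pos rfl]
      rw [hsum, htsum]; ring
    have hadd : (G x + lam • xs) n = G x n + lam * xs n := by
      simp [lp.coeFn_add, lp.coeFn_smul]
      rfl
    have hueval : (xs n : ℝ) = if n = m then ι*t else y n / lam := rfl
    rw [hadd, hGxn, hueval]
    by_cases h : n = m
    · subst h
      rw [if_pos rfl, if_neg (lt_irrefl n), if_neg (lt_irrefl n), if_pos rfl]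
      ring
    · rw [if_neg h, if_neg h]
      rcases lt_or_gt_of_ne h with hlt | hgt
      · rw [if_pos hlt, if_neg (by omega), if_pos hlt]
        field_simp
        ring
      · rw [if_neg (by omega), if_pos hgt, if_neg (by omega)]
        field_simp
        ring

lemma hull_dense (G : lp (fun _ : ℕ => ℝ) 1 →L[ℝ] lp (fun _ : ℕ => ℝ) ⊤)
    (hG : ∀ x : lp (fun _ : ℕ => ℝ) 1, ∀ n : ℕ,
      G x n = -(∑ k ∈ Finset.range n, x k) + ∑' k : ℕ, if n < k then x k else 0)
    (lam : ℝ) (hlam : 0 < lam) (y : lp (fun _ : ℕ => ℝ) (⊤:ℝ≥0∞)) (η : ℝ) (hη : 0 < η) :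
    ∃ w ∈ convexHull ℝ {g : lp (fun _ : ℕ => ℝ) ⊤ |
        ∃ x xs, xs ∈ dualityMapL1 x ∧ g = G x + lam • xs}, dist y w < η := by
  set S : Set (lp (fun _ : ℕ => ℝ) (⊤:ℝ≥0∞)) :=
    {g | ∃ x xs, xs ∈ dualityMapL1 x ∧ g = G x + lam • xs} with hS_def
  have hv : ∀ m : ℕ, ∃ v ∈ convexHull ℝ S, ∀ n, (v : ℕ → ℝ) n = if n = m then 0 else y n := by
    intro m
    obtain ⟨x1, xs1, hmem1, hc1⟩ := build_point G hG lam hlam y m 1 (Or.inl rfl)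
    obtain ⟨x2, xs2, hmem2, hc2⟩ := build_point G hG lam hlam y m (-1) (Or.inr rfl)
    refine ⟨(1/2 : ℝ) • (G x1 + lam • xs1) + (1/2 : ℝ) • (G x2 + lam • xs2), ?_, ?_⟩
    · exact (convex_convexHull ℝ S) (subset_convexHull ℝ S ⟨x1, xs1, hmem1, rfl⟩)
        (subset_convexHull ℝ S ⟨x2, xs2, hmem2, rfl⟩) (by norm_num) (by norm_num) (by norm_num)
    · intro n
      have hcoord : ((1/2 : ℝ) • (G x1 + lam • xs1) + (1/2 : ℝ) • (G x2 + lam • xs2)) n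
          = (1/2 : ℝ) * (G x1 + lam • xs1) n + (1/2 : ℝ) * (G x2 + lam • xs2) n := by
        rw [lp.coeFn_add, Pi.add_apply, lp.coeFn_smul, lp.coeFn_smul]
        rfl
      rw [hcoord, hc1 n, hc2 n]
      by_cases h : n = m
      · rw [if_pos h, if_pos h, if_pos h]; ring
      · rw [if_neg h, if_neg h, if_neg h]
        by_cases h2 : n < m
        · rw [if_pos h2, if_pos h2]; ring
        · rw [if_neg h2, if_neg h2]; ring
  choose v hvmem hvc using hv
  set K : ℕ := Nat.floor (‖y‖/η) + 1 with hK_def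
  have hK0 : 0 < K := Nat.succ_pos _
  have hKR : (0:ℝ) < K := by exact_mod_cast hK0
  set w := ∑ m ∈ Finset.range K, ((K:ℝ)⁻¹) • v m with hw_def
  have hwmem : w ∈ convexHull ℝ S := by
    refine Convex.sum_mem (convex_convexHull ℝ S) (fun i _ => by positivity) ?_
      (fun i _ => hvmem i)
    rw [Finset.sum_const, Finset.card_range, nsmul_eq_mul]
    field_simp
  have hwc : ∀ n, (w : ℕ → ℝ) n = ∑ m ∈ Finset.range K, (K:ℝ)⁻¹ * (if n = m then 0 else y n) := by
    intro n
    rw [hw_def, lp.coeFn_sum, Finset.sum_apply]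
    refine Finset.sum_congr rfl fun m _ => ?_
    rw [lp.coeFn_smul, Pi.smul_apply, hvc m n, smul_eq_mul]
  have hdiff : ∀ n, (y : ℕ → ℝ) n - w n = (K:ℝ)⁻¹ * (if n < K then y n else 0) := by
    intro n
    rw [hwc n]
    rw [← Finset.mul_sum]
    have hsplit : ∑ m ∈ Finset.range K, (if n = m then (0:ℝ) else y n)
        = ∑ m ∈ Finset.range K, (y n - if m = n then y n else 0) := by
      refine Finset.sum_congr rfl fun m _ => ?_
      by_cases h : n = m
      · rw [if_pos h, if_pos h.symm]; ring
      · rw [if_neg h, if_neg (fun hh => h hh.symm)]; ring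
    rw [hsplit, Finset.sum_sub_distrib, Finset.sum_const, Finset.card_range,
      Finset.sum_ite_eq' (Finset.range K) n (fun _ => (y : ℕ → ℝ) n), nsmul_eq_mul]
    simp only [Finset.mem_range]
    rw [mul_sub, ← mul_assoc, inv_mul_cancel₀ (ne_of_gt hKR), one_mul]
    ring
  have hnorm : ‖y - w‖ ≤ (K:ℝ)⁻¹ * ‖y‖ := by
    refine lp.norm_le_of_forall_le (by positivity) fun n => ?_
    have h1 : (y - w) n = (y : ℕ → ℝ) n - w n := by rw [lp.coeFn_sub]; rfl
    rw [Real.norm_eq_abs, h1, hdiff n, abs_mul, abs_of_pos (by positivity : (0:ℝ) < (K:ℝ)⁻¹)]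
    refine mul_le_mul_of_nonneg_left ?_ (by positivity)
    by_cases h : n < K
    · rw [if_pos h]; exact linf_apply_le y n
    · rw [if_neg h]; simp [norm_nonneg]
  refine ⟨w, hwmem, ?_⟩
  have hlt : (K:ℝ)⁻¹ * ‖y‖ < η := by
    have h1 : ‖y‖/η < K := by
      have := Nat.lt_floor_add_one (‖y‖/η)
      push_cast [hK_def]
      exact_mod_cast this
    rw [div_lt_iff₀ hη] at h1
    rw [inv_mul_lt_iff₀ hKR]
    linarith [mul_comm (K:ℝ) η]
  calc dist y w = ‖y - w‖ := dist_eq_norm y w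
  _ ≤ (K:ℝ)⁻¹ * ‖y‖ := hnorm
  _ < η := hlt

end GossezAux

theorem stmt17 (G : lp (fun _ : ℕ => ℝ) 1 →L[ℝ] lp (fun _ : ℕ => ℝ) ⊤)
    (hG : ∀ x : lp (fun _ : ℕ => ℝ) 1, ∀ n : ℕ,
      G x n = -(∑ k ∈ Finset.range n, x k) + ∑' k : ℕ, if n < k then x k else 0)
    (f : lp (fun _ : ℕ => ℝ) ⊤) (hf : ∀ n, f n = -1) :
    (∀ lam > (0:ℝ), ∀ ε > (0:ℝ), ∀ x : lp (fun _ : ℕ => ℝ) 1,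
      (∃ xs ∈ dualityMapL1 x, ‖G x + lam • xs - f‖ ≤ ε) → ∑' n, x n * f n ≤ 3 * ε) ∧
    ∀ lam > (0:ℝ),
      let R := closure {g : lp (fun _ : ℕ => ℝ) ⊤ |
        ∃ x xs, xs ∈ dualityMapL1 x ∧ g = G x + lam • xs}
      ¬ Convex ℝ R ∧ closure (convexHull ℝ R) = Set.univ := by
  have key : ∀ lam : ℝ, 0 < lam → ∀ ε : ℝ, 0 < ε →
      ∀ x : lp (fun _ : ℕ => ℝ) 1, ∀ xs : lp (fun _ : ℕ => ℝ) ⊤, xs ∈ dualityMapL1 x →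
      ‖G x + lam • xs - f‖ ≤ ε →
      |lam * ‖x‖^2 + (∑' n, x n)| ≤ ε*‖x‖ ∧ 1 - (∑' n, x n) - ε ≤ lam*‖x‖ ∧
        -(∑' n, x n) ≤ 3*ε := by
    intro lam hlam ε hε x xs hmem hb
    refine gossez_key lam ε hlam hε x xs hmem.1 hmem.2 ?_
    intro n
    have e1 : ⇑(G x + lam • xs - f) = ⇑(G x) + lam • ⇑xs - ⇑f := by
      rw [lp.coeFn_sub, lp.coeFn_add, lp.coeFn_smul]
    have h1 : |(⇑(G x) + lam • ⇑xs - ⇑f) n| ≤ ε := by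
      rw [← e1]
      exact le_trans (linf_apply_le _ n) hb
    have h1' : |G x n + lam * xs n - f n| ≤ ε := by
      simpa using h1
    rw [hf n, hG x n] at h1'
    convert h1' using 2
    ring
  constructor
  · rintro lam hlam ε hε x ⟨xs, hmem, hb⟩
    have h := (key lam hlam ε hε x xs hmem hb).2.2
    have heq : ∑' n, (x : ℕ → ℝ) n * f n = -(∑' n, (x : ℕ → ℝ) n) := by
      rw [← tsum_neg]
      exact tsum_congr fun n => by rw [hf n]; ring
    rw [heq]
    exact h
  · intro lam hlam
    intro R
    have hUniv : closure (convexHull ℝ R) = Set.univ := by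
      apply Set.eq_univ_of_forall
      intro y
      have hsub : {g : lp (fun _ : ℕ => ℝ) ⊤ |
          ∃ x xs, xs ∈ dualityMapL1 x ∧ g = G x + lam • xs} ⊆ R := subset_closure
      have h2 := convexHull_mono hsub (𝕜 := ℝ)
      rw [Metric.mem_closure_iff]
      intro η hη
      obtain ⟨w, hw, hd⟩ := hull_dense G hG lam hlam y η hη
      exact ⟨w, h2 hw, hd⟩
    refine ⟨?_, hUniv⟩
    intro hconv
    have hnotin : f ∉ R := by
      intro hmem
      set ε := min (1/8:ℝ) (min (lam/8) (1/(20*lam))) with hε_def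
      have hε : 0 < ε := lt_min (by norm_num) (lt_min (by positivity) (by positivity))
      obtain ⟨g, hgS, hdist⟩ := Metric.mem_closure_iff.mp hmem ε hε
      obtain ⟨x, xs, hxs, rfl⟩ := hgS
      have hb : ‖G x + lam • xs - f‖ ≤ ε := by
        rw [dist_eq_norm] at hdist
        rw [← norm_neg]
        simp only [neg_sub]
        exact le_of_lt hdist
      obtain ⟨hA, hT, hC⟩ := key lam hlam ε hε x xs hxs hb
      refine far_from lam ε ‖x‖ (∑' n, x n) hlam hε (min_le_left _ _)
        (le_trans (min_le_right _ _) (min_le_left _ _)) ?_ (norm_nonneg _) hA hT hC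
      have h3 : ε ≤ 1/(20*lam) := le_trans (min_le_right _ _) (min_le_right _ _)
      have h4 : (0:ℝ) < 20*lam := by positivity
      calc 20*lam*ε ≤ 20*lam*(1/(20*lam)) := mul_le_mul_of_nonneg_left h3 h4.le
      _ = 1 := by field_simp
    have hcl : IsClosed R := isClosed_closure
    rw [hconv.convexHull_eq, hcl.closure_eq] at hUniv
    rw [hUniv] at hnotin
    exact hnotin (Set.mem_univ f)
end

section
/- The Fitzpatrick–Phelps operator F : L¹[0,1] → L∞[0,1], defined by (Fx)(t) = ∫₀ᵗ x(s) ds − ∫ₜ¹ x(s) ds, is a bounded linear operator with ‖F‖ = 1 and is skew: ⟨x, Fx⟩ = ∫₀¹ x(t)(Fx)(t) dt = 0 for every x ∈ L¹[0,1]. -/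
open MeasureTheory Set ENNReal

local notation "ν" => volume.restrict (Set.Icc (0:ℝ) 1)
local notation "π" => Measure.prod (volume.restrict (Set.Icc (0:ℝ) 1)) (volume.restrict (Set.Icc (0:ℝ) 1))

noncomputable section

namespace Stmt18


lemma meas_univ : ν Set.univ = 1 := by
  simp [Real.volume_Icc]

instance : IsFiniteMeasure ν := ⟨by simp [Real.volume_Icc]⟩

/-- the primitive-like function -/
def g (x : Lp ℝ 1 ν) : ℝ → ℝ := fun t =>
  (∫ s in Set.Ioc (0:ℝ) t, x s ∂ν) - ∫ s in Set.Ioc t (1:ℝ), x s ∂ν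

lemma hx_int (x : Lp ℝ 1 ν) : Integrable x ν := L1.integrable_coeFn x

lemma measurable_g (x : Lp ℝ 1 ν) : Measurable (g x) := by
  have hf := hx_int x
  have hpos : Integrable (fun s => max (x s) 0) ν := hf.pos_part
  have hneg : Integrable (fun s => max (-(x s)) 0) ν := hf.neg.pos_part
  have hsplit : ∀ S : Set ℝ, ∫ s in S, x s ∂ν =
      (∫ s in S, max (x s) 0 ∂ν) - ∫ s in S, max (-(x s)) 0 ∂ν := by
    intro S
    rw [← integral_sub hpos.integrableOn hneg.integrableOn]
    congr 1 with s
    rcases le_total (x s) 0 with h | h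
    · simp [max_eq_left, max_eq_right, h, neg_nonneg.2 h]
    · simp [max_eq_left h, max_eq_right, neg_nonpos.2 h]
  have mono1 : ∀ (y : ℝ → ℝ), Integrable (fun s => max (y s) 0) ν →
      Monotone (fun t => ∫ s in Set.Ioc (0:ℝ) t, max (y s) 0 ∂ν) := by
    intro y h a b hab
    exact setIntegral_mono_set h.integrableOn
      (Filter.Eventually.of_forall fun s => le_max_right _ _)
      (HasSubset.Subset.eventuallyLE (Set.Ioc_subset_Ioc_right hab))
  have mono2 : ∀ (y : ℝ → ℝ), Integrable (fun s => max (y s) 0) ν →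
      Antitone (fun t => ∫ s in Set.Ioc t (1:ℝ), max (y s) 0 ∂ν) := by
    intro y h a b hab
    exact setIntegral_mono_set h.integrableOn
      (Filter.Eventually.of_forall fun s => le_max_right _ _)
      (HasSubset.Subset.eventuallyLE (Set.Ioc_subset_Ioc_left hab))
  have : g x = fun t =>
      ((∫ s in Set.Ioc (0:ℝ) t, max (x s) 0 ∂ν) - ∫ s in Set.Ioc (0:ℝ) t, max (-(x s)) 0 ∂ν)
      - ((∫ s in Set.Ioc t (1:ℝ), max (x s) 0 ∂ν) - ∫ s in Set.Ioc t (1:ℝ), max (-(x s)) 0 ∂ν) := by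
    funext t; simp only [g, hsplit]
  rw [this]
  exact (((mono1 _ hpos).measurable.sub (mono1 _ hneg).measurable).sub
    (((mono2 _ hpos).measurable).sub ((mono2 _ hneg).measurable)))

lemma g_bound (x : Lp ℝ 1 ν) (t : ℝ) : |g x t| ≤ ‖x‖ := by
  have hf := hx_int x
  have h1 : |∫ s in Set.Ioc (0:ℝ) t, x s ∂ν| ≤ ∫ s in Set.Ioc (0:ℝ) t, |x s| ∂ν := by
    simpa [Real.norm_eq_abs] using
      norm_integral_le_integral_norm (μ := Measure.restrict ν (Set.Ioc (0:ℝ) t)) (fun s => (x s : ℝ))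
  have h2 : |∫ s in Set.Ioc t (1:ℝ), x s ∂ν| ≤ ∫ s in Set.Ioc t (1:ℝ), |x s| ∂ν := by
    simpa [Real.norm_eq_abs] using
      norm_integral_le_integral_norm (μ := Measure.restrict ν (Set.Ioc t (1:ℝ))) (fun s => (x s : ℝ))
  have habs : Integrable (fun s => |x s|) ν := hf.abs
  have hdisj : Disjoint (Set.Ioc (0:ℝ) t) (Set.Ioc t 1) := Set.Ioc_disjoint_Ioc_of_le le_rfl
  have hunion : (∫ s in Set.Ioc (0:ℝ) t, |x s| ∂ν) + (∫ s in Set.Ioc t (1:ℝ), |x s| ∂ν)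
      = ∫ s in Set.Ioc (0:ℝ) t ∪ Set.Ioc t 1, |x s| ∂ν :=
    (setIntegral_union hdisj measurableSet_Ioc habs.integrableOn habs.integrableOn).symm
  have hle : (∫ s in Set.Ioc (0:ℝ) t ∪ Set.Ioc t 1, |x s| ∂ν) ≤ ∫ s, |x s| ∂ν :=
    setIntegral_le_integral habs (Filter.Eventually.of_forall fun s => abs_nonneg _)
  have hnorm : ‖x‖ = ∫ s, |x s| ∂ν := by
    simpa [Real.norm_eq_abs] using L1.norm_eq_integral_norm x
  calc |g x t| ≤ |∫ s in Set.Ioc (0:ℝ) t, x s ∂ν| + |∫ s in Set.Ioc t (1:ℝ), x s ∂ν| :=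
        abs_sub _ _
    _ ≤ (∫ s in Set.Ioc (0:ℝ) t, |x s| ∂ν) + (∫ s in Set.Ioc t (1:ℝ), |x s| ∂ν) :=
        add_le_add h1 h2
    _ ≤ ∫ s, |x s| ∂ν := by rw [hunion]; exact hle
    _ = ‖x‖ := hnorm.symm

lemma memℒp_g (x : Lp ℝ 1 ν) : MemLp (g x) ⊤ ν :=
  memLp_top_of_bound (measurable_g x).aestronglyMeasurable ‖x‖
    (Filter.Eventually.of_forall fun t => by
      simpa [Real.norm_eq_abs] using g_bound x t)


variable (x y : Lp ℝ 1 ν)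


lemma setInt_add (S : Set ℝ) : ∫ s in S, (↑(x + y) : ℝ → ℝ) s ∂ν =
    (∫ s in S, x s ∂ν) + ∫ s in S, y s ∂ν := by
  rw [integral_congr_ae (ae_restrict_of_ae (Lp.coeFn_add x y))]
  simp only [Pi.add_apply]
  exact integral_add (hx_int x).integrableOn (hx_int y).integrableOn

lemma setInt_smul (c : ℝ) (S : Set ℝ) : ∫ s in S, (↑(c • x) : ℝ → ℝ) s ∂ν =
    c * ∫ s in S, x s ∂ν := by
  rw [integral_congr_ae (ae_restrict_of_ae (Lp.coeFn_smul c x))]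
  simp only [Pi.smul_apply, smul_eq_mul]
  exact integral_const_mul c _

lemma g_add : g (x + y) = g x + g y := by
  funext t
  simp only [g, Pi.add_apply, setInt_add]
  ring

lemma g_smul (c : ℝ) : g (c • x) = c • g x := by
  funext t
  simp only [g, Pi.smul_apply, setInt_smul, smul_eq_mul]
  ring

def Fl : Lp ℝ 1 ν →ₗ[ℝ] Lp ℝ ⊤ ν where
  toFun x := (memℒp_g x).toLp (g x)
  map_add' x y := by
    have h1 : (memℒp_g (x + y)).toLp (g (x + y))
        = ((memℒp_g x).add (memℒp_g y)).toLp (g x + g y) := by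
      apply MemLp.toLp_congr
      rw [g_add]
    show (memℒp_g (x + y)).toLp (g (x + y)) = (memℒp_g x).toLp (g x) + (memℒp_g y).toLp (g y)
    rw [h1, MemLp.toLp_add]
  map_smul' c x := by
    have h1 : (memℒp_g (c • x)).toLp (g (c • x))
        = ((memℒp_g x).const_smul c).toLp (c • g x) := by
      apply MemLp.toLp_congr
      rw [g_smul]
    show (memℒp_g (c • x)).toLp (g (c • x)) = c • (memℒp_g x).toLp (g x)
    rw [h1, MemLp.toLp_const_smul]

lemma norm_Fl_le (x : Lp ℝ 1 ν) : ‖Fl x‖ ≤ 1 * ‖x‖ := by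
  rw [one_mul]
  show ‖(memℒp_g x).toLp (g x)‖ ≤ ‖x‖
  rw [Lp.norm_toLp]
  refine ENNReal.toReal_le_of_le_ofReal (norm_nonneg x) ?_
  rw [eLpNorm_exponent_top]
  exact eLpNormEssSup_le_of_ae_bound (Filter.Eventually.of_forall fun t => by
    simpa [Real.norm_eq_abs] using g_bound x t)

def F : Lp ℝ 1 ν →L[ℝ] Lp ℝ ⊤ ν := Fl.mkContinuous 1 norm_Fl_le

lemma F_ae (x : Lp ℝ 1 ν) : (F x : ℝ → ℝ) =ᵐ[ν] g x := MemLp.coeFn_toLp (memℒp_g x)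


lemma norm_F_le : ‖F‖ ≤ 1 := LinearMap.mkContinuous_norm_le Fl zero_le_one norm_Fl_le


def x₀ : Lp ℝ 1 ν := (memLp_const (1:ℝ)).toLp (fun _ => (1:ℝ))

lemma x₀_ae : (x₀ : ℝ → ℝ) =ᵐ[ν] fun _ => 1 := MemLp.coeFn_toLp _

lemma norm_x₀ : ‖x₀‖ = 1 := by
  rw [x₀, Lp.norm_toLp, eLpNorm_const (1:ℝ) one_ne_zero (by simp [Measure.restrict_eq_zero, Real.volume_Icc] : ν ≠ 0)]
  simp [Real.volume_Icc]

lemma g_x₀ (t : ℝ) (ht : t ∈ Set.Icc (0:ℝ) 1) : g x₀ t = 2 * t - 1 := by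
  have h1 : ∫ s in Set.Ioc (0:ℝ) t, x₀ s ∂ν = (ν (Set.Ioc (0:ℝ) t)).toReal := by
    rw [integral_congr_ae (ae_restrict_of_ae x₀_ae)]
    simp [measureReal_def]
  have h2 : ∫ s in Set.Ioc t (1:ℝ), x₀ s ∂ν = (ν (Set.Ioc t (1:ℝ))).toReal := by
    rw [integral_congr_ae (ae_restrict_of_ae x₀_ae)]
    simp [measureReal_def]
  have m1 : ν (Set.Ioc (0:ℝ) t) = ENNReal.ofReal t := by
    rw [Measure.restrict_apply measurableSet_Ioc,
Set.inter_eq_self_of_subset_left (Set.Ioc_subset_Icc_self.trans (Set.Icc_subset_Icc_right ht.2)),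
      Real.volume_Ioc]
    simp [ht.1]
  have m2 : ν (Set.Ioc t (1:ℝ)) = ENNReal.ofReal (1 - t) := by
    rw [Measure.restrict_apply measurableSet_Ioc,
Set.inter_eq_self_of_subset_left (Set.Ioc_subset_Icc_self.trans (Set.Icc_subset_Icc_left ht.1)),
      Real.volume_Ioc]
  simp only [g, h1, h2, m1, m2]
  rw [ENNReal.toReal_ofReal ht.1, ENNReal.toReal_ofReal (by linarith [ht.2])]
  ring

lemma one_le_essSup : (1 : ℝ≥0∞) ≤ eLpNormEssSup (g x₀) ν := by
  by_contra hc
  push_neg at hc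
  set c := eLpNormEssSup (g x₀) ν with hcdef
  have hcne : c ≠ ⊤ := ne_top_of_lt (lt_of_lt_of_le hc le_top)
  have hctr : c.toReal < 1 := by
    rw [← ENNReal.toReal_one]
    exact (ENNReal.toReal_lt_toReal hcne ENNReal.one_ne_top).mpr hc
  have hc0 : 0 ≤ c.toReal := ENNReal.toReal_nonneg
  set δ : ℝ := min ((1 - c.toReal) / 2) 1 with hδdef
  have hδpos : 0 < δ := lt_min (by linarith) one_pos
  have hae : ∀ᵐ t ∂ν, (‖g x₀ t‖₊ : ℝ≥0∞) ≤ c := ae_le_eLpNormEssSup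
  have haemem : ∀ᵐ t ∂ν, t ∈ Set.Icc (0:ℝ) 1 := ae_restrict_mem measurableSet_Icc
  have hbad : ∀ᵐ t ∂ν, t ∉ Set.Ioo (0:ℝ) δ := by
    filter_upwards [hae, haemem] with t h1 h2 ht
    have hg : g x₀ t = 2 * t - 1 := g_x₀ t h2
    have htδ : t < (1 - c.toReal) / 2 := lt_of_lt_of_le ht.2 (min_le_left _ _)
    have habs : c.toReal < |2 * t - 1| := by
      rw [abs_of_nonpos (by linarith)]
      linarith
    have : c < (‖g x₀ t‖₊ : ℝ≥0∞) := by
      rw [show (‖g x₀ t‖₊ : ℝ≥0∞) = ENNReal.ofReal ‖g x₀ t‖ from (ofReal_norm _).symm, hg]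
      rw [ENNReal.lt_ofReal_iff_toReal_lt hcne]
      simpa [Real.norm_eq_abs] using habs
    exact absurd h1 (not_le.mpr this)
  have : ν (Set.Ioo (0:ℝ) δ) = 0 := by
    exact measure_eq_zero_iff_ae_notMem.mpr hbad
  rw [Measure.restrict_apply measurableSet_Ioo] at this
  have hsub : Set.Ioo (0:ℝ) δ ∩ Set.Icc 0 1 = Set.Ioo (0:ℝ) δ := by
    apply Set.inter_eq_self_of_subset_left
    intro t ht
    exact ⟨le_of_lt ht.1, le_of_lt (lt_of_lt_of_le ht.2 (min_le_right _ _))⟩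
  rw [hsub, Real.volume_Ioo] at this
  simp only [ENNReal.ofReal_eq_zero, sub_zero] at this
  linarith

lemma norm_F_eq : ‖F‖ = 1 := by
  refine le_antisymm norm_F_le ?_
  have h1 : ‖F x₀‖ ≤ ‖F‖ * ‖x₀‖ := F.le_opNorm x₀
  rw [norm_x₀, mul_one] at h1
  refine le_trans ?_ h1
  have : ‖F x₀‖ = (eLpNorm (g x₀) ⊤ ν).toReal := by
    rw [Lp.norm_def, eLpNorm_congr_ae (F_ae x₀)]
  rw [this, eLpNorm_exponent_top]
  have hfin : eLpNormEssSup (g x₀) ν ≠ ⊤ := (memℒp_g x₀).2.ne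
  rw [show (1:ℝ) = (1:ℝ≥0∞).toReal by simp]
  exact ENNReal.toReal_le_toReal ENNReal.one_ne_top hfin |>.mpr one_le_essSup



section skew
variable (x : Lp ℝ 1 ν)

def h (x : Lp ℝ 1 ν) : ℝ × ℝ → ℝ := fun p => x p.1 * x p.2

def E : Set (ℝ × ℝ) := {p | 0 < p.2 ∧ p.2 ≤ p.1}
def E' : Set (ℝ × ℝ) := {p | 0 < p.1 ∧ p.1 ≤ p.2}
def E'' : Set (ℝ × ℝ) := {p | p.1 < p.2 ∧ p.2 ≤ 1}

lemma hE : MeasurableSet E :=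
  (measurableSet_lt measurable_const measurable_snd).inter
    (measurableSet_le measurable_snd measurable_fst)
lemma hE' : MeasurableSet E' :=
  (measurableSet_lt measurable_const measurable_fst).inter
    (measurableSet_le measurable_fst measurable_snd)
lemma hE'' : MeasurableSet E'' :=
  (measurableSet_lt measurable_fst measurable_snd).inter
    (measurableSet_le measurable_snd measurable_const)

lemma hh_int : Integrable (h x) π := (hx_int x).mul_prod (hx_int x)

lemma null_fst_le : π {p : ℝ × ℝ | p.1 ≤ 0} = 0 := by
  have : {p : ℝ × ℝ | p.1 ≤ 0} = Set.Iic (0:ℝ) ×ˢ (Set.univ : Set ℝ) := by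
    ext p; simp [Set.mem_prod]
  rw [this, Measure.prod_prod]
  have : ν (Set.Iic (0:ℝ)) = 0 := by
    rw [Measure.restrict_apply measurableSet_Iic]
    have : Set.Iic (0:ℝ) ∩ Set.Icc 0 1 = {0} := by
      ext t; simp only [Set.mem_inter_iff, Set.mem_Iic, Set.mem_Icc, Set.mem_singleton_iff]
      constructor
      · rintro ⟨h1, h2, _⟩; linarith
      · rintro rfl; norm_num
    rw [this]; simp
  rw [this, zero_mul]

lemma null_snd_gt : π {p : ℝ × ℝ | 1 < p.2} = 0 := by
  have : {p : ℝ × ℝ | 1 < p.2} = (Set.univ : Set ℝ) ×ˢ Set.Ioi (1:ℝ) := by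
    ext p; simp [Set.mem_prod]
  rw [this, Measure.prod_prod]
  have : ν (Set.Ioi (1:ℝ)) = 0 := by
    rw [Measure.restrict_apply measurableSet_Ioi]
    have : Set.Ioi (1:ℝ) ∩ Set.Icc 0 1 = ∅ := by
      ext t
      simp only [Set.mem_inter_iff, Set.mem_Ioi, Set.mem_Icc, Set.mem_empty_iff_false, iff_false,
        not_and]
      intro h1 h2 h3; linarith
    rw [this]; simp
  rw [this, mul_zero]

lemma null_diag : π {p : ℝ × ℝ | p.1 = p.2} = 0 := by
  have hD : MeasurableSet {p : ℝ × ℝ | p.1 = p.2} :=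
    measurableSet_eq_fun measurable_fst measurable_snd
  rw [Measure.prod_apply hD]
  have : ∀ t : ℝ, (Prod.mk t ⁻¹' {p : ℝ × ℝ | p.1 = p.2}) = {t} := by
    intro t; ext s; simp [eq_comm]
  simp_rw [this]
  simp

lemma E''_ae_E' : E'' =ᵐ[π] E' := by
  have hnull : π ({p : ℝ × ℝ | p.1 ≤ 0} ∪ {p | 1 < p.2} ∪ {p | p.1 = p.2}) = 0 :=
    measure_union_null (measure_union_null (null_fst_le) (null_snd_gt)) (null_diag)
  have h1 : E'' \ E' ⊆ {p : ℝ × ℝ | p.1 ≤ 0} ∪ {p | 1 < p.2} ∪ {p | p.1 = p.2} := by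
    rintro ⟨t, s⟩ ⟨⟨hts, hs1⟩, hne⟩
    simp only [E', Set.mem_setOf_eq, not_and, not_le] at hne
    left; left
    simp only [Set.mem_setOf_eq]
    by_contra hpos
    push_neg at hpos
    exact absurd (hne hpos) (not_lt.mpr (le_of_lt hts))
  have h2 : E' \ E'' ⊆ {p : ℝ × ℝ | p.1 ≤ 0} ∪ {p | 1 < p.2} ∪ {p | p.1 = p.2} := by
    rintro ⟨t, s⟩ ⟨⟨ht0, hts⟩, hne⟩
    simp only [E'', Set.mem_setOf_eq, not_and, not_le] at hne
    rcases eq_or_lt_of_le hts with heq | hlt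
    · right; exact heq
    · left; right; exact hne hlt
  rw [MeasureTheory.ae_eq_set]
  exact ⟨measure_mono_null h1 hnull, measure_mono_null h2 hnull⟩

lemma key_A :
    Integrable (fun t => (x t : ℝ) * ∫ s in Set.Ioc (0:ℝ) t, x s ∂ν) ν ∧
    ∫ t, (x t : ℝ) * (∫ s in Set.Ioc (0:ℝ) t, x s ∂ν) ∂ν = ∫ p in E, h x p ∂π := by
  have hind : Integrable (E.indicator (h x)) π := (hh_int x).indicator hE
  have heq : ∀ t : ℝ, (x t : ℝ) * (∫ s in Set.Ioc (0:ℝ) t, x s ∂ν)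
      = ∫ s, E.indicator (h x) (t, s) ∂ν := by
    intro t
    have hip : ∀ s, E.indicator (h x) (t, s)
        = (Set.Ioc (0:ℝ) t).indicator (fun s => h x (t, s)) s := by
      intro s
      by_cases hs : s ∈ Set.Ioc (0:ℝ) t
      · rw [Set.indicator_of_mem hs, Set.indicator_of_mem]
        exact ⟨hs.1, hs.2⟩
      · rw [Set.indicator_of_notMem hs, Set.indicator_of_notMem]
        intro hmem; exact hs ⟨hmem.1, hmem.2⟩
    simp_rw [hip]
    rw [integral_indicator measurableSet_Ioc]
    exact (integral_const_mul _ _).symm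
  constructor
  · exact hind.integral_prod_left.congr
      (Filter.Eventually.of_forall fun t => (heq t).symm)
  · calc ∫ t, (x t : ℝ) * (∫ s in Set.Ioc (0:ℝ) t, x s ∂ν) ∂ν
        = ∫ t, ∫ s, E.indicator (h x) (t, s) ∂ν ∂ν := by
          exact integral_congr_ae (Filter.Eventually.of_forall heq)
      _ = ∫ p, E.indicator (h x) p ∂π := by
          exact integral_integral hind
      _ = ∫ p in E, h x p ∂π := integral_indicator hE

lemma key_B :
    Integrable (fun t => (x t : ℝ) * ∫ s in Set.Ioc t (1:ℝ), x s ∂ν) ν ∧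
    ∫ t, (x t : ℝ) * (∫ s in Set.Ioc t (1:ℝ), x s ∂ν) ∂ν = ∫ p in E'', h x p ∂π := by
  have hind : Integrable (E''.indicator (h x)) π := (hh_int x).indicator hE''
  have heq : ∀ t : ℝ, (x t : ℝ) * (∫ s in Set.Ioc t (1:ℝ), x s ∂ν)
      = ∫ s, E''.indicator (h x) (t, s) ∂ν := by
    intro t
    have hip : ∀ s, E''.indicator (h x) (t, s)
        = (Set.Ioc t (1:ℝ)).indicator (fun s => h x (t, s)) s := by
      intro s
      by_cases hs : s ∈ Set.Ioc t (1:ℝ)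
      · rw [Set.indicator_of_mem hs, Set.indicator_of_mem]
        exact ⟨hs.1, hs.2⟩
      · rw [Set.indicator_of_notMem hs, Set.indicator_of_notMem]
        intro hmem; exact hs ⟨hmem.1, hmem.2⟩
    simp_rw [hip]
    rw [integral_indicator measurableSet_Ioc]
    exact (integral_const_mul _ _).symm
  constructor
  · exact hind.integral_prod_left.congr
      (Filter.Eventually.of_forall fun t => (heq t).symm)
  · calc ∫ t, (x t : ℝ) * (∫ s in Set.Ioc t (1:ℝ), x s ∂ν) ∂ν
        = ∫ t, ∫ s, E''.indicator (h x) (t, s) ∂ν ∂ν := by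
          exact integral_congr_ae (Filter.Eventually.of_forall heq)
      _ = ∫ p, E''.indicator (h x) p ∂π := by
          exact integral_integral hind
      _ = ∫ p in E'', h x p ∂π := integral_indicator hE''

lemma swap_eq : ∫ p in E', h x p ∂π = ∫ p in E, h x p ∂π := by
  have hmp : MeasurePreserving Prod.swap π π := Measure.measurePreserving_swap
  have key := hmp.setIntegral_preimage_emb
    MeasurableEquiv.prodComm.measurableEmbedding (h x) E
  have hset : Prod.swap ⁻¹' E = E' := by
    ext p; simp [E, E', Prod.swap]
  have hcomm : ∀ p : ℝ × ℝ, h x (Prod.swap p) = h x p := fun p => mul_comm _ _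
  rw [hset] at key
  rw [← key]
  exact integral_congr_ae (Filter.Eventually.of_forall fun p => (hcomm p).symm)

lemma skew : ∫ t, (x t : ℝ) * F x t ∂ν = 0 := by
  have h1 : ∫ t, (x t : ℝ) * F x t ∂ν = ∫ t, (x t : ℝ) * g x t ∂ν := by
    apply integral_congr_ae
    filter_upwards [F_ae x] with t ht
    rw [ht]
  rw [h1]
  have h2 : ∀ t, (x t : ℝ) * g x t
      = (x t : ℝ) * (∫ s in Set.Ioc (0:ℝ) t, x s ∂ν)
        - (x t : ℝ) * (∫ s in Set.Ioc t (1:ℝ), x s ∂ν) := by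
    intro t; rw [g]; ring
  calc ∫ t, (x t : ℝ) * g x t ∂ν
      = ∫ t, ((x t : ℝ) * (∫ s in Set.Ioc (0:ℝ) t, x s ∂ν)
          - (x t : ℝ) * (∫ s in Set.Ioc t (1:ℝ), x s ∂ν)) ∂ν :=
        integral_congr_ae (Filter.Eventually.of_forall h2)
    _ = (∫ t, (x t : ℝ) * (∫ s in Set.Ioc (0:ℝ) t, x s ∂ν) ∂ν)
          - ∫ t, (x t : ℝ) * (∫ s in Set.Ioc t (1:ℝ), x s ∂ν) ∂ν :=
        integral_sub (key_A x).1 (key_B x).1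
    _ = (∫ p in E, h x p ∂π) - ∫ p in E'', h x p ∂π := by
        rw [(key_A x).2, (key_B x).2]
    _ = (∫ p in E, h x p ∂π) - ∫ p in E', h x p ∂π := by
        rw [setIntegral_congr_set E''_ae_E']
    _ = 0 := by rw [swap_eq]; ring

end skew

end Stmt18

end

theorem stmt18 :
    ∃ F : Lp ℝ 1 (volume.restrict (Set.Icc (0:ℝ) 1)) →L[ℝ]
          Lp ℝ ⊤ (volume.restrict (Set.Icc (0:ℝ) 1)),
      (∀ x : Lp ℝ 1 (volume.restrict (Set.Icc (0:ℝ) 1)),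
        ∀ᵐ t ∂(volume.restrict (Set.Icc (0:ℝ) 1)),
          F x t = (∫ s in Set.Ioc (0:ℝ) t, x s ∂(volume.restrict (Set.Icc (0:ℝ) 1))) -
                  (∫ s in Set.Ioc t (1:ℝ), x s ∂(volume.restrict (Set.Icc (0:ℝ) 1)))) ∧
      ‖F‖ = 1 ∧
      ∀ x : Lp ℝ 1 (volume.restrict (Set.Icc (0:ℝ) 1)),
        ∫ t, x t * F x t ∂(volume.restrict (Set.Icc (0:ℝ) 1)) = 0 := by
  exact ⟨Stmt18.F, fun x => Stmt18.F_ae x, Stmt18.norm_F_eq, fun x => Stmt18.skew x⟩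
end
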